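/- Let Γ be a symmetric numerical semigroup with δ := #(ℕ∖Γ) ≥ 1, and take p = q = 1, a = 0. Then t_0 = 2δ−2, τ_0(2t) = t(t−2δ+1)/2 for 0 ≤ t ≤ 2δ−1, and r_0 = δ(δ−1); moreover there is an isomorphism of graded ℤ[U]-modules ℍ(R_{τ_0},χ_{τ_0})[δ(δ−1)] ≅ T⁺_0 ⊕ T_0(α_{δ−1}) ⊕ ⊕_{i=1}^{δ−1} T_{i(i+1)}(α_{δ−1+i})^{⊕2}, and the kernel of the U-action on this module is isomorphic to ⊕_{i=0}^{δ−1} ℤ_{(i²+i)}^{⊕2}, where ℤ_{(r)} denotes a rank-one free ℤ-module in degree r. -/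

import Mathlib

noncomputable section

/-- `T⁺₀ = ℤ[U,U⁻¹]/(U·ℤ[U])`, modeled as finitely supported functions `ℕ → ℤ`;
`Finsupp.single h 1` represents `U^{-h}`, which is homogeneous of degree `2h`. -/
abbrev TPlus : Type := ℕ →₀ ℤ

/-- The `U`-action on `T⁺₀`: `U · U^{-h} = U^{-(h-1)}` for `h ≥ 1`, `U · U^0 = 0`. -/
def shiftU : TPlus →ₗ[ℤ] TPlus where
  toFun f := Finsupp.comapDomain (· + 1) f (fun a _ b _ h => by simpa using h)
  map_add' f g := by
    ext h
    show (f + g) (h + 1) = f (h + 1) + g (h + 1)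
    simp
  map_smul' c f := by
    ext h
    show (c • f) (h + 1) = c * f (h + 1)
    simp

lemma shiftU_apply (f : TPlus) (h : ℕ) : shiftU f h = f (h + 1) := rfl

/-- The submodule `T₀(n) ⊂ T⁺₀` spanned by `U^{-h}`, `0 ≤ h ≤ n-1`. -/
def Tower (n : ℕ) : Submodule ℤ TPlus where
  carrier := {f | ∀ h, n ≤ h → f h = 0}
  add_mem' := by
    intro a b ha hb h hh
    simp [Finsupp.add_apply, ha h hh, hb h hh]
  zero_mem' := by intro h hh; rfl
  smul_mem' := by
    intro c f hf h hh
    simp [Finsupp.smul_apply, hf h hh]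

/-- Homogeneity of degree `d` in the shifted module `T⁺_r` or `T_r(n)`:
the coefficient of `U^{-h}` has degree `2h + r`. -/
def THomog (r d : ℚ) (f : TPlus) : Prop := ∀ h : ℕ, f h ≠ 0 → 2 * (h : ℚ) + r = d

/-- `ℍ(R,χ)` for a graph with vertex set `V`, adjacency `Adj` and grading `χ`:
functions `φ` from vertices to `T⁺₀` with `U · φ(v) = φ(w)` along edges with `χ v < χ w`. -/
def Hmod {V : Type} (Adj : V → V → Prop) (χ : V → ℤ) : Submodule ℤ (V → TPlus) where
  carrier := {φ | ∀ v w, Adj v w → χ v < χ w → shiftU (φ v) = φ w}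
  add_mem' := by
    intro a b ha hb v w hvw hχ
    simp only [Pi.add_apply, map_add, ha v w hvw hχ, hb v w hvw hχ]
  zero_mem' := by intro v w _ _; simp
  smul_mem' := by
    intro c f hf v w hvw hχ
    simp only [Pi.smul_apply, map_smul, hf v w hvw hχ]

lemma mem_Hmod {V : Type} {Adj : V → V → Prop} {χ : V → ℤ} {φ : V → TPlus} :
    φ ∈ Hmod Adj χ ↔ ∀ v w, Adj v w → χ v < χ w → shiftU (φ v) = φ w := Iff.rfl

/-- The (pointwise) `U`-action on `ℍ(R,χ)`. -/
def HU {V : Type} (Adj : V → V → Prop) (χ : V → ℤ) : Hmod Adj χ →ₗ[ℤ] Hmod Adj χ where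
  toFun φ := ⟨fun v => shiftU (φ.1 v), by
    intro v w hvw hχ
    show shiftU (shiftU (φ.1 v)) = shiftU (φ.1 w)
    rw [mem_Hmod.1 φ.2 v w hvw hχ]⟩
  map_add' a b := by
    apply Subtype.ext
    funext v
    simp
  map_smul' c a := by
    apply Subtype.ext
    funext v
    simp

/-- Homogeneity of degree `d` in the shifted module `ℍ(R,χ)[r]`:
`φ` is homogeneous of degree `d` if each `φ(v)` is homogeneous of degree `d - r - 2χ(v)`
in `T⁺₀`. -/
def HHomog {V : Type} (χ : V → ℤ) (r d : ℚ) (φ : V → TPlus) : Prop :=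
  ∀ v, THomog (2 * (χ v : ℚ) + r) d (φ v)

/-- The underlying module of a direct sum `T⁺ ⊕ ⊕_{i ∈ I} T(len i)`. -/
abbrev Targ {I : Type} (len : I → ℕ) : Type := TPlus × ((i : I) → Tower (len i))

def towerShift {n : ℕ} (f : Tower n) : Tower n :=
  ⟨shiftU f.1, by
    intro h hh
    rw [shiftU_apply]
    exact f.2 (h + 1) (by omega)⟩

/-- The `U`-action on `Targ len`. -/
def TargU {I : Type} (len : I → ℕ) : Targ len →ₗ[ℤ] Targ len where
  toFun x := (shiftU x.1, fun i => towerShift (x.2 i))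
  map_add' a b := by
    refine Prod.ext ?_ ?_
    · simp
    · funext i
      apply Subtype.ext
      simp [towerShift]
  map_smul' c a := by
    refine Prod.ext ?_ ?_
    · simp
    · funext i
      apply Subtype.ext
      simp [towerShift]

/-- Homogeneity of degree `d` in `T⁺_{r₀} ⊕ ⊕_{i ∈ I} T_{rI i}(len i)`. -/
def TargHomog {I : Type} {len : I → ℕ} (r₀ : ℚ) (rI : I → ℚ) (d : ℚ) (x : Targ len) : Prop :=
  THomog r₀ d x.1 ∧ ∀ i, THomog (rI i) d ((x.2 i) : TPlus)

end

noncomputable section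

/-- Pre-vertices of the graded root `R_τ` associated with `τ : {0,…,T₀} → ℤ`:
pairs `(i,k)` with `i ≤ T₀` and `τ i ≤ k`, representing the vertex `v_i^k`. -/
def RootVpre (T0 : ℕ) (τ : ℕ → ℤ) : Type := {x : ℕ × ℤ // x.1 ≤ T0 ∧ τ x.1 ≤ x.2}

/-- The identification `v_i^k ∼ v_j^k` whenever `k ≥ τ(l)` for every `l` between `i` and `j`. -/
def RootSetoid (T0 : ℕ) (τ : ℕ → ℤ) : Setoid (RootVpre T0 τ) where
  r x y := x.1.2 = y.1.2 ∧
    ∀ l : ℕ, ((x.1.1 ≤ l ∧ l ≤ y.1.1) ∨ (y.1.1 ≤ l ∧ l ≤ x.1.1)) → τ l ≤ x.1.2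
  iseqv := by
    constructor
    · intro x
      refine ⟨rfl, ?_⟩
      intro l hl
      have : l = x.1.1 := by omega
      rw [this]
      exact x.2.2
    · intro x y h
      refine ⟨h.1.symm, ?_⟩
      intro l hl
      rw [← h.1]
      exact h.2 l (by tauto)
    · intro x y z hxy hyz
      refine ⟨hxy.1.trans hyz.1, ?_⟩
      intro l hl
      have h2 := hxy.2
      have h3 := hyz.2
      rcases (by omega :
          ((x.1.1 ≤ l ∧ l ≤ y.1.1) ∨ (y.1.1 ≤ l ∧ l ≤ x.1.1)) ∨
          ((y.1.1 ≤ l ∧ l ≤ z.1.1) ∨ (z.1.1 ≤ l ∧ l ≤ y.1.1))) with h | h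
      · exact h2 l h
      · rw [hxy.1]
        exact h3 l h

/-- The vertex set of the graded root `R_τ`. -/
def RootV (T0 : ℕ) (τ : ℕ → ℤ) : Type := Quotient (RootSetoid T0 τ)

/-- The grading `χ_τ` of `R_τ`. -/
def rootχ (T0 : ℕ) (τ : ℕ → ℤ) : RootV T0 τ → ℤ :=
  Quotient.lift (fun x : RootVpre T0 τ => x.1.2) (fun _ _ h => h.1)

/-- The vertex `v_i^{k+1}` above `v_i^k`. -/
def rootStep (T0 : ℕ) (τ : ℕ → ℤ) (x : RootVpre T0 τ) : RootVpre T0 τ :=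
  ⟨(x.1.1, x.1.2 + 1), x.2.1, by show τ x.1.1 ≤ x.1.2 + 1; have := x.2.2; omega⟩

/-- The edges of `R_τ`: each `v_i^k` is connected with `v_i^{k+1}`. -/
def rootAdj (T0 : ℕ) (τ : ℕ → ℤ) (u v : RootV T0 τ) : Prop :=
  (∃ x, u = Quotient.mk (RootSetoid T0 τ) x ∧
        v = Quotient.mk (RootSetoid T0 τ) (rootStep T0 τ x)) ∨
  (∃ x, v = Quotient.mk (RootSetoid T0 τ) x ∧
        u = Quotient.mk (RootSetoid T0 τ) (rootStep T0 τ x))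

/-- A vertex of `R_τ` (given `i ≤ T₀` and `τ i ≤ k`). -/
def rootMk (T0 : ℕ) (τ : ℕ → ℤ) (i : ℕ) (k : ℤ) (hi : i ≤ T0) (hk : τ i ≤ k) :
    RootV T0 τ :=
  Quotient.mk (RootSetoid T0 τ) ⟨(i, k), hi, hk⟩

/-- A local minimum point of a χ-graded graph. -/
def IsLocMin {V : Type} (Adj : V → V → Prop) (χ : V → ℤ) (v : V) : Prop :=
  ∀ w, Adj v w → χ v < χ w

end

noncomputable section

/-- The delta-invariant `δ = #(ℕ∖Γ)` of a numerical semigroup `Γ`. -/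
def sdelta (Γ : Set ℕ) : ℕ := Γᶜ.ncard

/-- `α_i = #{k ∈ ℕ∖Γ : k > i}`. -/
def salpha (Γ : Set ℕ) (i : ℕ) : ℕ := {k : ℕ | k ∉ Γ ∧ i < k}.ncard

/-- `τ_a(2t) = t(1−δ) + Σ_{j=0}^{t−1} ⌊(jp+a)/q⌋`. -/
def tauEven (Γ : Set ℕ) (p q a : ℕ) (t : ℕ) : ℤ :=
  (t : ℤ) * (1 - (sdelta Γ : ℤ)) + ∑ j ∈ Finset.range t, (((j * p + a) / q : ℕ) : ℤ)

/-- The function `τ_a : {0,1,…,2t_a+2} → ℤ`: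
`τ_a(2t)` as above and `τ_a(2t+1) = τ_a(2t+2) + α_{⌊(tp+a)/q⌋}`. -/
def tauFun (Γ : Set ℕ) (p q a : ℕ) (n : ℕ) : ℤ :=
  if n % 2 = 0 then tauEven Γ p q a (n / 2)
  else tauEven Γ p q a (n / 2 + 1) + (salpha Γ ((n / 2 * p + a) / q) : ℤ)

/-- `t_a = ⌊((2δ−1)q − a − 1)/p⌋`. -/
def tA (Γ : Set ℕ) (p q a : ℕ) : ℤ :=
  ((2 * (sdelta Γ : ℤ) - 1) * (q : ℤ) - (a : ℤ) - 1) / (p : ℤ)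

/-- The length `T₀ = 2t_a + 2` of the domain of `τ_a`. -/
def rootT0 (Γ : Set ℕ) (p q a : ℕ) : ℕ := (2 * tA Γ p q a + 2).toNat

end

/-- The sawtooth function `((x))`. -/
noncomputable def sawtooth (x : ℚ) : ℚ :=
  if x = (⌊x⌋ : ℚ) then 0 else Int.fract x - 1 / 2

/-- The Dedekind sum `s(q,p) = Σ_{l=0}^{p−1} ((l/p))·((ql/p))`. -/
noncomputable def dedekindSum (q p : ℕ) : ℚ :=
  ∑ l ∈ Finset.range p, sawtooth ((l : ℚ) / p) * sawtooth ((q * l : ℚ) / p)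

-- AUX development part 1: SU, Tower lemmas, THomog lemmas
noncomputable section
namespace HFAux

/-- iterated shift: `SU m f h = f (h + m)` -/
def SU (m : ℕ) (f : TPlus) : TPlus :=
  Finsupp.comapDomain (· + m) f (fun a _ b _ h => by simpa using h)

@[simp] lemma SU_apply (m : ℕ) (f : TPlus) (h : ℕ) : SU m f h = f (h + m) := rfl

@[simp] lemma SU_zero (f : TPlus) : SU 0 f = f := by
  ext h; simp

lemma SU_SU (a b : ℕ) (f : TPlus) : SU a (SU b f) = SU (a + b) f := by
  ext h; simp [add_assoc]

lemma shiftU_SU (m : ℕ) (f : TPlus) : shiftU (SU m f) = SU (m + 1) f := by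
  ext h
  rw [shiftU_apply, SU_apply, SU_apply]
  congr 1
  omega

lemma SU_shiftU (m : ℕ) (f : TPlus) : SU m (shiftU f) = SU (m + 1) f := by
  ext h
  rw [SU_apply, SU_apply, shiftU_apply]
  congr 1

lemma SU_add (m : ℕ) (f g : TPlus) : SU m (f + g) = SU m f + SU m g := by
  ext h; simp

lemma SU_sub (m : ℕ) (f g : TPlus) : SU m (f - g) = SU m f - SU m g := by
  ext h; simp

lemma SU_smul (m : ℕ) (c : ℤ) (f : TPlus) : SU m (c • f) = c • SU m f := by
  ext h; simp

lemma mem_Tower_iff {n : ℕ} {f : TPlus} : f ∈ Tower n ↔ ∀ h, n ≤ h → f h = 0 := Iff.rfl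

lemma SU_eq_zero_of_mem_Tower {n : ℕ} {f : TPlus} (hf : f ∈ Tower n) : SU n f = 0 := by
  ext h; simpa using hf (h + n) (by omega)

lemma mem_tower_of_SU_eq {a b : ℕ} {f g : TPlus} (h : SU a f = SU (a + b) g) :
    f - SU b g ∈ Tower a := by
  intro h' hh
  have := congrArg (fun F : TPlus => F (h' - a)) h
  simp only [SU_apply] at this
  have e1 : h' - a + a = h' := by omega
  have e2 : h' - a + (a + b) = h' + b := by omega
  rw [e1, e2] at this
  simp [Finsupp.sub_apply, this]

lemma THomog_add {s d : ℚ} {f g : TPlus} (hf : THomog s d f) (hg : THomog s d g) :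
    THomog s d (f + g) := by
  intro h hh
  by_cases h1 : f h ≠ 0
  · exact hf h h1
  · apply hg h
    intro h2
    push_neg at h1
    simp [Finsupp.add_apply, h1, h2] at hh

lemma THomog_sub {s d : ℚ} {f g : TPlus} (hf : THomog s d f) (hg : THomog s d g) :
    THomog s d (f - g) := by
  intro h hh
  by_cases h1 : f h ≠ 0
  · exact hf h h1
  · apply hg h
    intro h2
    push_neg at h1
    simp [Finsupp.sub_apply, h1, h2] at hh

lemma THomog_SU {s d : ℚ} {f : TPlus} (m : ℕ) (hf : THomog s d f) :
    THomog (s + 2 * m) d (SU m f) := by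
  intro h hh
  rw [SU_apply] at hh
  have := hf (h + m) hh
  push_cast at this ⊢
  linarith

lemma THomog_congr {s s' d : ℚ} {f : TPlus} (h : s = s') (hf : THomog s d f) :
    THomog s' d f := h ▸ hf

lemma THomog_zero {s d : ℚ} : THomog s d (0 : TPlus) := by
  intro h hh; simp at hh

end HFAux
end
-- AUX part 2: generic graded-root lemmas
noncomputable section
namespace HFAux

variable (T0 : ℕ) (τ : ℕ → ℤ)

lemma rootχ_mk (i : ℕ) (k : ℤ) (hi : i ≤ T0) (hk : τ i ≤ k) :
    rootχ T0 τ (rootMk T0 τ i k hi hk) = k := rfl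

lemma root_glue {i j : ℕ} {k : ℤ} (hi : i ≤ T0) (hj : j ≤ T0) (hki : τ i ≤ k) (hkj : τ j ≤ k)
    (h : ∀ l : ℕ, ((i ≤ l ∧ l ≤ j) ∨ (j ≤ l ∧ l ≤ i)) → τ l ≤ k) :
    rootMk T0 τ i k hi hki = rootMk T0 τ j k hj hkj :=
  Quotient.sound ⟨rfl, h⟩

lemma rootMk_congr {i : ℕ} {k k' : ℤ} (hi : i ≤ T0) (hk : τ i ≤ k) (hk' : τ i ≤ k')
    (h : k = k') : rootMk T0 τ i k hi hk = rootMk T0 τ i k' hi hk' := by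
  subst h; rfl

variable {T0 τ}

lemma step_val {φ : RootV T0 τ → TPlus} (hφ : φ ∈ Hmod (rootAdj T0 τ) (rootχ T0 τ))
    (x : RootVpre T0 τ) :
    φ (Quotient.mk (RootSetoid T0 τ) (rootStep T0 τ x)) =
      shiftU (φ (Quotient.mk (RootSetoid T0 τ) x)) := by
  refine (mem_Hmod.1 hφ _ _ (Or.inl ⟨x, rfl, rfl⟩) ?_).symm
  show x.1.2 < x.1.2 + 1
  omega

/-- values along an infinite path -/
lemma val_add {φ : RootV T0 τ → TPlus} (hφ : φ ∈ Hmod (rootAdj T0 τ) (rootχ T0 τ))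
    {i : ℕ} {k : ℤ} (hi : i ≤ T0) (hk : τ i ≤ k) (m : ℕ) :
    φ (rootMk T0 τ i (k + m) hi (by omega)) = SU m (φ (rootMk T0 τ i k hi hk)) := by
  induction m with
  | zero =>
      rw [SU_zero]
      exact congrArg φ (rootMk_congr T0 τ hi _ hk (by push_cast; ring))
  | succ m ih =>
      have hstep : rootMk T0 τ i (k + (m+1 : ℕ)) hi (by omega) =
          Quotient.mk (RootSetoid T0 τ)
            (rootStep T0 τ ⟨(i, k + m), hi, by show τ i ≤ k + (m:ℤ); omega⟩) := by
        apply congrArg (Quotient.mk (RootSetoid T0 τ))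
        apply Subtype.ext
        show (i, k + ((m : ℤ)+1)) = (i, k + (m : ℤ) + 1)
        rw [Prod.mk.injEq]
        exact ⟨rfl, by ring⟩
      rw [hstep, step_val hφ ⟨(i, k + m), hi, by show τ i ≤ k + (m:ℤ); omega⟩]
      have : (Quotient.mk (RootSetoid T0 τ) ⟨(i, k + (m:ℤ)), hi, by show τ i ≤ k + (m:ℤ); omega⟩ : RootV T0 τ)
          = rootMk T0 τ i (k + m) hi (by omega) := rfl
      rw [this, ih, shiftU_SU]

lemma val_ge {φ : RootV T0 τ → TPlus} (hφ : φ ∈ Hmod (rootAdj T0 τ) (rootχ T0 τ))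
    {i : ℕ} {k k' : ℤ} (hi : i ≤ T0) (hk : τ i ≤ k) (hk' : k ≤ k') :
    φ (rootMk T0 τ i k' hi (le_trans hk hk')) =
      SU (k' - k).toNat (φ (rootMk T0 τ i k hi hk)) := by
  have h1 : k' = k + ((k' - k).toNat : ℤ) := by omega
  rw [← val_add hφ hi hk (k' - k).toNat]
  exact congrArg φ (rootMk_congr T0 τ hi _ _ h1)

/-- build an element of `Hmod` from compatible bottom values -/
def buildFun (f : ℕ → TPlus) : RootVpre T0 τ → TPlus :=
  fun x => SU (x.1.2 - τ x.1.1).toNat (f x.1.1)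

variable (T0 τ) in
structure Compat (f : ℕ → TPlus) : Prop where
  compat : ∀ i, i + 1 ≤ T0 → ∀ k : ℤ, τ i ≤ k → τ (i+1) ≤ k →
    SU (k - τ i).toNat (f i) = SU (k - τ (i+1)).toNat (f (i+1))

lemma build_wd {f : ℕ → TPlus} (hf : Compat T0 τ f) :
    ∀ x y : RootVpre T0 τ, (RootSetoid T0 τ).r x y →
      buildFun (τ := τ) f x = buildFun (τ := τ) f y := by
  have chain : ∀ (k : ℤ) (i j : ℕ), i ≤ j → j ≤ T0 →
      (∀ l : ℕ, i ≤ l → l ≤ j → τ l ≤ k) →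
      SU (k - τ i).toNat (f i) = SU (k - τ j).toNat (f j) := by
    intro k i j hij hjT hall
    induction j, hij using Nat.le_induction with
    | base => rfl
    | succ j hij ih =>
        rw [ih (by omega) (fun l h1 h2 => hall l h1 (by omega))]
        exact hf.compat j hjT k (hall j (by omega) (by omega)) (hall (j+1) (by omega) (by omega))
  intro x y hxy
  obtain ⟨hk, hall⟩ := hxy
  unfold buildFun
  rcases le_total x.1.1 y.1.1 with h | h
  · rw [hk]
    rw [← hk]
    exact (hk ▸ chain x.1.2 x.1.1 y.1.1 h y.2.1 (fun l h1 h2 => hall l (Or.inl ⟨h1, h2⟩)))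
  · exact (chain x.1.2 y.1.1 x.1.1 h x.2.1 (fun l h1 h2 => hall l (Or.inr ⟨h1, h2⟩))).symm
      |>.trans (by rw [hk])

def buildPhi {f : ℕ → TPlus} (hf : Compat T0 τ f) : RootV T0 τ → TPlus :=
  Quotient.lift (buildFun (τ := τ) f) (build_wd hf)

lemma buildPhi_mk {f : ℕ → TPlus} (hf : Compat T0 τ f) (i : ℕ) (k : ℤ)
    (hi : i ≤ T0) (hk : τ i ≤ k) :
    buildPhi hf (rootMk T0 τ i k hi hk) = SU (k - τ i).toNat (f i) := rfl

lemma buildPhi_mem {f : ℕ → TPlus} (hf : Compat T0 τ f) :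
    buildPhi hf ∈ Hmod (rootAdj T0 τ) (rootχ T0 τ) := by
  intro v w hvw hχ
  rcases hvw with ⟨x, rfl, rfl⟩ | ⟨x, rfl, rfl⟩
  · show shiftU (SU (x.1.2 - τ x.1.1).toNat (f x.1.1))
      = SU ((x.1.2 + 1) - τ x.1.1).toNat (f x.1.1)
    rw [shiftU_SU]
    congr 1
    have := x.2.2
    omega
  · exfalso
    have : rootχ T0 τ (Quotient.mk (RootSetoid T0 τ) (rootStep T0 τ x)) = x.1.2 + 1 := rfl
    have h2 : rootχ T0 τ (Quotient.mk (RootSetoid T0 τ) x) = x.1.2 := rfl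
    omega

end HFAux
end
-- AUX part 3: symmetric semigroup combinatorics
noncomputable section
namespace HFAux
open Classical in
/-- the finset of gaps -/
def gapsF (Γ : Set ℕ) : Finset ℕ := (Finset.range (2 * sdelta Γ)).filter (· ∉ Γ)

section Gamma
variable {Γ : Set ℕ} (h0 : 0 ∈ Γ) (hfin : Γᶜ.Finite) (hδ1 : 1 ≤ sdelta Γ)
  (hsym : ∀ k : ℕ, k ≤ 2 * sdelta Γ - 1 → (k ∈ Γ ↔ (2 * sdelta Γ - 1 - k) ∉ Γ))

open Classical

include hsym hδ1 in
lemma gapsF_card : (gapsF Γ).card = sdelta Γ := by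
  classical
  set δ := sdelta Γ
  have hbij : ((Finset.range (2*δ)).filter (· ∈ Γ)).card = (gapsF Γ).card := by
    apply Finset.card_bij' (fun k _ => 2*δ - 1 - k) (fun k _ => 2*δ - 1 - k)
    · intro a ha
      simp only [Finset.mem_filter, Finset.mem_range] at ha
      simp only [gapsF, Finset.mem_filter, Finset.mem_range]
      exact ⟨by omega, (hsym a (by omega)).1 ha.2⟩
    · intro a ha
      simp only [gapsF, Finset.mem_filter, Finset.mem_range] at ha
      simp only [Finset.mem_filter, Finset.mem_range]
      refine ⟨by omega, ?_⟩
      have := hsym (2*δ-1-a) (by omega)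
      rw [show 2*δ-1-(2*δ-1-a) = a by omega] at this
      exact this.2 ha.2
    · intro a ha
      simp only [Finset.mem_filter, Finset.mem_range] at ha
      omega
    · intro a ha
      simp only [gapsF, Finset.mem_filter, Finset.mem_range] at ha
      omega
  have hsum : ((Finset.range (2*δ)).filter (· ∈ Γ)).card + (gapsF Γ).card = 2*δ := by
    rw [gapsF]
    rw [Finset.card_filter_add_card_filter_not (p := (· ∈ Γ))]
    exact Finset.card_range (2*δ)
  omega

include h0 hfin hδ1 hsym in
lemma compl_eq_gapsF : Γᶜ = ↑(gapsF Γ) := by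
  classical
  have hsub : ↑(gapsF Γ) ⊆ Γᶜ := by
    intro k hk
    simp only [gapsF, Finset.coe_filter, Set.mem_setOf_eq, Finset.mem_range] at hk
    exact hk.2
  have hcard : (Γᶜ).ncard ≤ (↑(gapsF Γ) : Set ℕ).ncard := by
    rw [Set.ncard_coe_finset, gapsF_card hδ1 hsym]
    exact le_of_eq rfl
  exact (Set.eq_of_subset_of_ncard_le hsub hcard hfin).symm

include h0 hfin hδ1 hsym in
lemma gap_lt {k : ℕ} (hk : k ∉ Γ) : k < 2 * sdelta Γ := by
  have : k ∈ Γᶜ := hk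
  rw [compl_eq_gapsF h0 hfin hδ1 hsym] at this
  simp only [gapsF, Finset.coe_filter, Set.mem_setOf_eq, Finset.mem_range] at this
  exact this.1

include h0 hfin hδ1 hsym in
lemma salpha_eq (i : ℕ) : salpha Γ i = ((gapsF Γ).filter (fun k => i < k)).card := by
  classical
  rw [salpha, ← Set.ncard_coe_finset]
  congr 1
  ext k
  simp only [Set.mem_setOf_eq, Finset.coe_filter, Finset.mem_filter]
  constructor
  · intro ⟨hk, hik⟩
    refine ⟨?_, hik⟩
    have : k ∈ Γᶜ := hk
    rwa [compl_eq_gapsF h0 hfin hδ1 hsym] at this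
  · intro ⟨hk, hik⟩
    have : k ∈ Γᶜ := by rw [compl_eq_gapsF h0 hfin hδ1 hsym]; exact hk
    exact ⟨this, hik⟩

include h0 hfin hδ1 hsym in
lemma frob_gap : (2 * sdelta Γ - 1) ∉ Γ := by
  have := (hsym 0 (by omega)).1 h0
  simpa using this

include h0 hfin hδ1 hsym in
lemma salpha_pos {t : ℕ} (ht : t < 2 * sdelta Γ - 1) : 1 ≤ salpha Γ t := by
  classical
  rw [salpha_eq h0 hfin hδ1 hsym]
  have : (2 * sdelta Γ - 1) ∈ (gapsF Γ).filter (fun k => t < k) := by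
    simp only [gapsF, Finset.mem_filter, Finset.mem_range]
    exact ⟨⟨by omega, frob_gap h0 hfin hδ1 hsym⟩, ht⟩
  exact Finset.card_pos.2 ⟨_, this⟩

include h0 hfin hδ1 hsym in
lemma salpha_sym {i : ℕ} (hi : i ≤ sdelta Γ - 1) :
    salpha Γ (sdelta Γ - 1 - i) = salpha Γ (sdelta Γ - 1 + i) + i := by
  classical
  set δ := sdelta Γ with hδ
  rw [salpha_eq h0 hfin hδ1 hsym, salpha_eq h0 hfin hδ1 hsym]
  have hsplit : (gapsF Γ).filter (fun k => δ - 1 - i < k)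
      = (gapsF Γ).filter (fun k => δ - 1 + i < k)
        ∪ (gapsF Γ).filter (fun k => δ - 1 - i < k ∧ k ≤ δ - 1 + i) := by
    ext k
    simp only [Finset.mem_union, Finset.mem_filter]
    constructor
    · rintro ⟨hk, h2⟩
      rcases le_or_gt k (δ - 1 + i) with h | h
      · exact Or.inr ⟨hk, h2, h⟩
      · exact Or.inl ⟨hk, h⟩
    · rintro (⟨hk, h2⟩ | ⟨hk, h2, h3⟩)
      · exact ⟨hk, by omega⟩
      · exact ⟨hk, h2⟩
  have hdisj : Disjoint ((gapsF Γ).filter (fun k => δ - 1 + i < k))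
      ((gapsF Γ).filter (fun k => δ - 1 - i < k ∧ k ≤ δ - 1 + i)) := by
    rw [Finset.disjoint_left]
    intro k hk hk2
    simp only [Finset.mem_filter] at hk hk2
    omega
  rw [hsplit, Finset.card_union_of_disjoint hdisj]
  congr 1
  -- middle interval has exactly i gaps
  have hmid : (gapsF Γ).filter (fun k => δ - 1 - i < k ∧ k ≤ δ - 1 + i)
      = (Finset.Ioc (δ - 1 - i) (δ - 1 + i)).filter (· ∉ Γ) := by
    ext k
    simp only [gapsF, Finset.mem_filter, Finset.mem_range, Finset.mem_Ioc]
    constructor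
    · rintro ⟨⟨h1, h2⟩, h3, h4⟩; exact ⟨⟨h3, h4⟩, h2⟩
    · rintro ⟨⟨h1, h2⟩, h3⟩
      exact ⟨⟨by omega, h3⟩, h1, h2⟩
  rw [hmid]
  have hbij : ((Finset.Ioc (δ - 1 - i) (δ - 1 + i)).filter (· ∈ Γ)).card
      = ((Finset.Ioc (δ - 1 - i) (δ - 1 + i)).filter (· ∉ Γ)).card := by
    apply Finset.card_bij' (fun k _ => 2*δ - 1 - k) (fun k _ => 2*δ - 1 - k)
    · intro a ha
      simp only [Finset.mem_filter, Finset.mem_Ioc] at ha ⊢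
      refine ⟨⟨by omega, by omega⟩, (hsym a (by omega)).1 ha.2⟩
    · intro a ha
      simp only [Finset.mem_filter, Finset.mem_Ioc] at ha ⊢
      refine ⟨⟨by omega, by omega⟩, ?_⟩
      have := hsym (2*δ-1-a) (by omega)
      rw [show 2*δ-1-(2*δ-1-a) = a by omega] at this
      exact this.2 ha.2
    · intro a ha
      simp only [Finset.mem_filter, Finset.mem_Ioc] at ha
      omega
    · intro a ha
      simp only [Finset.mem_filter, Finset.mem_Ioc] at ha
      omega
  have hsum : ((Finset.Ioc (δ - 1 - i) (δ - 1 + i)).filter (· ∈ Γ)).card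
      + ((Finset.Ioc (δ - 1 - i) (δ - 1 + i)).filter (· ∉ Γ)).card = 2 * i := by
    rw [Finset.card_filter_add_card_filter_not (p := (· ∈ Γ))]
    rw [Nat.card_Ioc]
    omega
  omega

end Gamma
end HFAux
end
-- AUX part 4: numerics for p = q = 1, a = 0
noncomputable section
namespace HFAux
section Num
variable {Γ : Set ℕ} (h0 : 0 ∈ Γ) (hfin : Γᶜ.Finite) (hδ1 : 1 ≤ sdelta Γ)
  (hsym : ∀ k : ℕ, k ≤ 2 * sdelta Γ - 1 → (k ∈ Γ ↔ (2 * sdelta Γ - 1 - k) ∉ Γ))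

omit h0 hfin hsym in
include hδ1 in
lemma rootT0_eq : rootT0 Γ 1 1 0 = 4 * sdelta Γ - 2 := by
  have : tA Γ 1 1 0 = 2 * (sdelta Γ : ℤ) - 2 := by
    simp only [tA, Nat.cast_one, Nat.cast_zero, mul_one, sub_zero, Int.ediv_one]
    ring
  rw [rootT0, this]
  omega

lemma tau_even (t : ℕ) : tauFun Γ 1 1 0 (2 * t) = tauEven Γ 1 1 0 t := by
  rw [tauFun, if_pos (by omega)]
  congr 1
  omega

lemma tau_odd (t : ℕ) :
    tauFun Γ 1 1 0 (2 * t + 1) = tauEven Γ 1 1 0 (t + 1) + (salpha Γ t : ℤ) := by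
  rw [tauFun, if_neg (by omega)]
  have h1 : (2 * t + 1) / 2 = t := by omega
  rw [h1]
  norm_num

lemma tauEven_step (t : ℕ) :
    tauEven Γ 1 1 0 (t + 1) = tauEven Γ 1 1 0 t + (1 - (sdelta Γ : ℤ)) + t := by
  simp only [tauEven, Finset.sum_range_succ]
  push_cast
  ring_nf
  simp [Nat.div_one]
  ring

lemma tauEven_two (t : ℕ) :
    2 * tauEven Γ 1 1 0 t = t * (t + 1) - 2 * t * (sdelta Γ : ℤ) := by
  induction t with
  | zero => simp [tauEven]
  | succ t ih =>
      rw [tauEven_step]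
      push_cast
      push_cast at ih
      linarith

end Num
end HFAux
end
-- AUX part 5: leaves and merge lemmas for p = q = 1, a = 0
noncomputable section
namespace HFAux
section Leaves
variable {Γ : Set ℕ} (h0 : 0 ∈ Γ) (hfin : Γᶜ.Finite) (hδ1 : 1 ≤ sdelta Γ)
  (hsym : ∀ k : ℕ, k ≤ 2 * sdelta Γ - 1 → (k ∈ Γ ↔ (2 * sdelta Γ - 1 - k) ∉ Γ))

omit h0 hfin hsym in
include hδ1 in
lemma two_le_T0 : 2 ≤ rootT0 Γ 1 1 0 := by
  rw [rootT0_eq hδ1]; omega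

/-- the bottom vertex of the (2t)-th path, for `2t ≤ T0`; junk value otherwise -/
def leaf (hδ1 : 1 ≤ sdelta Γ) (t : ℕ) : RootV (rootT0 Γ 1 1 0) (tauFun Γ 1 1 0) :=
  if h : 2*t ≤ rootT0 Γ 1 1 0 then
    rootMk (rootT0 Γ 1 1 0) (tauFun Γ 1 1 0) (2*t) (tauFun Γ 1 1 0 (2*t)) h le_rfl
  else
    rootMk (rootT0 Γ 1 1 0) (tauFun Γ 1 1 0) 0 (tauFun Γ 1 1 0 0)
      (le_trans (by omega) (two_le_T0 hδ1)) le_rfl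

omit h0 hfin hsym in
lemma leaf_eq {t : ℕ} (h : 2*t ≤ rootT0 Γ 1 1 0) :
    leaf hδ1 t = rootMk (rootT0 Γ 1 1 0) (tauFun Γ 1 1 0) (2*t) (tauFun Γ 1 1 0 (2*t))
      h le_rfl := dif_pos h

/-- leaf values of a function on the graded root -/
def Lv (hδ1 : 1 ≤ sdelta Γ) (φ : RootV (rootT0 Γ 1 1 0) (tauFun Γ 1 1 0) → TPlus)
    (t : ℕ) : TPlus := φ (leaf hδ1 t)

omit h0 hfin hsym in
lemma Lv_add (φ ψ : RootV (rootT0 Γ 1 1 0) (tauFun Γ 1 1 0) → TPlus) (t : ℕ) :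
    Lv hδ1 (φ + ψ) t = Lv hδ1 φ t + Lv hδ1 ψ t := rfl

omit h0 hfin hsym in
lemma Lv_smul (c : ℤ) (φ : RootV (rootT0 Γ 1 1 0) (tauFun Γ 1 1 0) → TPlus) (t : ℕ) :
    Lv hδ1 (c • φ) t = c • Lv hδ1 φ t := rfl

omit h0 hfin hδ1 hsym in
lemma odd_sub (t : ℕ) :
    tauFun Γ 1 1 0 (2*t+1) =
      tauFun Γ 1 1 0 (2*t) + (1 - (sdelta Γ : ℤ) + t + salpha Γ t) := by
  rw [tau_odd, tau_even, tauEven_step]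
  ring

include h0 hfin hδ1 hsym in
lemma key1 {t : ℕ} (ht : t ≤ 2 * sdelta Γ - 2) :
    tauFun Γ 1 1 0 (2*t) < tauFun Γ 1 1 0 (2*t+1) := by
  rw [odd_sub]
  rcases le_or_gt (sdelta Γ - 1) t with h | h
  · have hpos := salpha_pos h0 hfin hδ1 hsym (t := t) (by omega)
    omega
  · have hi : sdelta Γ - 1 - (sdelta Γ - 1 - t) = t := by omega
    have hsymα := salpha_sym h0 hfin hδ1 hsym (i := sdelta Γ - 1 - t) (by omega)
    rw [hi] at hsymα
    have hpos := salpha_pos h0 hfin hδ1 hsym (t := sdelta Γ - 1 + (sdelta Γ - 1 - t)) (by omega)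
    omega

include h0 hfin hδ1 hsym in
lemma key2 {t : ℕ} (ht : t ≤ 2 * sdelta Γ - 2) :
    tauFun Γ 1 1 0 (2*t+2) < tauFun Γ 1 1 0 (2*t+1) := by
  rw [show 2*t+2 = 2*(t+1) by ring, tau_even, tau_odd]
  have hpos := salpha_pos h0 hfin hδ1 hsym (t := t) (by omega)
  omega

omit h0 hfin hδ1 hsym in
lemma expB (t : ℕ) :
    (tauFun Γ 1 1 0 (2*t+1) - tauFun Γ 1 1 0 (2*t+2)).toNat = salpha Γ t := by
  rw [show 2*t+2 = 2*(t+1) by ring, tau_even, tau_odd]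
  omega

omit hsym hδ1 in
lemma expA_right {t : ℕ} (ht : sdelta Γ - 1 ≤ t) :
    (tauFun Γ 1 1 0 (2*t+1) - tauFun Γ 1 1 0 (2*t)).toNat
      = salpha Γ t + (t + 1 - sdelta Γ) := by
  rw [odd_sub]
  omega

include h0 hfin hδ1 hsym in
lemma expA_left {j : ℕ} (hj : j < sdelta Γ - 1) :
    (tauFun Γ 1 1 0 (2*(sdelta Γ - 2 - j)+1) - tauFun Γ 1 1 0 (2*(sdelta Γ - 2 - j))).toNat
      = salpha Γ (sdelta Γ + j) := by
  rw [odd_sub]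
  have hi : sdelta Γ - 1 - (j+1) = sdelta Γ - 2 - j := by omega
  have hsymα := salpha_sym h0 hfin hδ1 hsym (i := j + 1) (by omega)
  rw [hi] at hsymα
  have h2 : sdelta Γ - 1 + (j + 1) = sdelta Γ + j := by omega
  rw [h2] at hsymα
  omega

include h0 hfin hδ1 hsym in
/-- the merge relation between consecutive leaves -/
lemma merge {φ : RootV (rootT0 Γ 1 1 0) (tauFun Γ 1 1 0) → TPlus}
    (hφ : φ ∈ Hmod (rootAdj (rootT0 Γ 1 1 0) (tauFun Γ 1 1 0))
      (rootχ (rootT0 Γ 1 1 0) (tauFun Γ 1 1 0)))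
    {t : ℕ} (ht : t ≤ 2 * sdelta Γ - 2) :
    SU (tauFun Γ 1 1 0 (2*t+1) - tauFun Γ 1 1 0 (2*t)).toNat (Lv hδ1 φ t)
      = SU (salpha Γ t) (Lv hδ1 φ (t+1)) := by
  have hT : rootT0 Γ 1 1 0 = 4 * sdelta Γ - 2 := rootT0_eq hδ1
  have h2t : 2*t ≤ rootT0 Γ 1 1 0 := by omega
  have h2t2 : 2*(t+1) ≤ rootT0 Γ 1 1 0 := by omega
  have hk1 : tauFun Γ 1 1 0 (2*t) ≤ tauFun Γ 1 1 0 (2*t+1) :=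
    le_of_lt (key1 h0 hfin hδ1 hsym ht)
  have hk2 : tauFun Γ 1 1 0 (2*(t+1)) ≤ tauFun Γ 1 1 0 (2*t+1) := by
    have := key2 h0 hfin hδ1 hsym ht
    rw [show 2*(t+1) = 2*t+2 by ring]
    omega
  have hglue : rootMk (rootT0 Γ 1 1 0) (tauFun Γ 1 1 0) (2*t)
        (tauFun Γ 1 1 0 (2*t+1)) h2t hk1
      = rootMk (rootT0 Γ 1 1 0) (tauFun Γ 1 1 0) (2*(t+1))
        (tauFun Γ 1 1 0 (2*t+1)) h2t2 hk2 := by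
    apply root_glue
    intro l hl
    have hl' : l = 2*t ∨ l = 2*t+1 ∨ l = 2*(t+1) := by omega
    rcases hl' with rfl | rfl | rfl
    · exact hk1
    · exact le_rfl
    · exact hk2
  have hv1 := val_ge hφ h2t (le_refl (tauFun Γ 1 1 0 (2*t))) hk1
  have hv2 := val_ge hφ h2t2 (le_refl (tauFun Γ 1 1 0 (2*(t+1)))) hk2
  have hexp : (tauFun Γ 1 1 0 (2*t+1) - tauFun Γ 1 1 0 (2*(t+1))).toNat = salpha Γ t := by
    rw [show 2*(t+1) = 2*t+2 by ring]
    exact expB t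
  rw [hexp] at hv2
  rw [Lv, Lv, leaf_eq hδ1 h2t, leaf_eq hδ1 h2t2, ← hv1, ← hv2, hglue]

end Leaves
end HFAux
end
-- AUX part 6: value representation, leaf determination, forward map
noncomputable section
namespace HFAux
section Fwd
variable {Γ : Set ℕ} (h0 : 0 ∈ Γ) (hfin : Γᶜ.Finite) (hδ1 : 1 ≤ sdelta Γ)
  (hsym : ∀ k : ℕ, k ≤ 2 * sdelta Γ - 1 → (k ∈ Γ ↔ (2 * sdelta Γ - 1 - k) ∉ Γ))

include h0 hfin hδ1 hsym in
lemma val_repr {φ : RootV (rootT0 Γ 1 1 0) (tauFun Γ 1 1 0) → TPlus}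
    (hφ : φ ∈ Hmod (rootAdj (rootT0 Γ 1 1 0) (tauFun Γ 1 1 0))
      (rootχ (rootT0 Γ 1 1 0) (tauFun Γ 1 1 0)))
    (i : ℕ) (k : ℤ) (hi : i ≤ rootT0 Γ 1 1 0) (hk : tauFun Γ 1 1 0 i ≤ k) :
    φ (rootMk (rootT0 Γ 1 1 0) (tauFun Γ 1 1 0) i k hi hk) =
      if i % 2 = 0 then SU (k - tauFun Γ 1 1 0 i).toNat (Lv hδ1 φ (i/2))
      else SU (k - tauFun Γ 1 1 0 i).toNat
        (SU (salpha Γ (i/2)) (Lv hδ1 φ (i/2 + 1))) := by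
  have hT : rootT0 Γ 1 1 0 = 4 * sdelta Γ - 2 := rootT0_eq hδ1
  by_cases hpar : i % 2 = 0
  · rw [if_pos hpar]
    obtain ⟨t, rfl⟩ : ∃ t, i = 2*t := ⟨i/2, by omega⟩
    rw [show 2*t/2 = t by omega]
    rw [val_ge hφ hi le_rfl hk, Lv, leaf_eq hδ1 hi]
  · rw [if_neg hpar]
    obtain ⟨t, rfl⟩ : ∃ t, i = 2*t+1 := ⟨i/2, by omega⟩
    rw [show (2*t+1)/2 = t by omega]
    have ht : t ≤ 2 * sdelta Γ - 2 := by omega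
    have h22 : 2*(t+1) ≤ rootT0 Γ 1 1 0 := by omega
    have hk2 : tauFun Γ 1 1 0 (2*(t+1)) ≤ tauFun Γ 1 1 0 (2*t+1) := by
      have := key2 h0 hfin hδ1 hsym ht
      rw [show 2*(t+1) = 2*t+2 by ring]
      omega
    have hglue : rootMk (rootT0 Γ 1 1 0) (tauFun Γ 1 1 0) (2*t+1)
          (tauFun Γ 1 1 0 (2*t+1)) hi le_rfl
        = rootMk (rootT0 Γ 1 1 0) (tauFun Γ 1 1 0) (2*(t+1))
          (tauFun Γ 1 1 0 (2*t+1)) h22 hk2 := by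
      apply root_glue
      intro l hl
      have hl' : l = 2*t+1 ∨ l = 2*(t+1) := by omega
      rcases hl' with rfl | rfl
      · exact le_rfl
      · exact hk2
    have hexp : (tauFun Γ 1 1 0 (2*t+1) - tauFun Γ 1 1 0 (2*(t+1))).toNat = salpha Γ t := by
      rw [show 2*(t+1) = 2*t+2 by ring]
      exact expB t
    rw [val_ge hφ hi le_rfl hk, hglue, val_ge hφ h22 le_rfl hk2, Lv, leaf_eq hδ1 h22, hexp]

include h0 hfin hδ1 hsym in
lemma leaf_det {φ ψ : RootV (rootT0 Γ 1 1 0) (tauFun Γ 1 1 0) → TPlus}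
    (hφ : φ ∈ Hmod (rootAdj (rootT0 Γ 1 1 0) (tauFun Γ 1 1 0))
      (rootχ (rootT0 Γ 1 1 0) (tauFun Γ 1 1 0)))
    (hψ : ψ ∈ Hmod (rootAdj (rootT0 Γ 1 1 0) (tauFun Γ 1 1 0))
      (rootχ (rootT0 Γ 1 1 0) (tauFun Γ 1 1 0)))
    (h : ∀ t, t ≤ 2 * sdelta Γ - 1 → Lv hδ1 φ t = Lv hδ1 ψ t) : φ = ψ := by
  have hT : rootT0 Γ 1 1 0 = 4 * sdelta Γ - 2 := rootT0_eq hδ1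
  funext v
  refine Quotient.inductionOn v ?_
  rintro ⟨⟨i, k⟩, hi, hk⟩
  have h1 := val_repr h0 hfin hδ1 hsym hφ i k hi hk
  have h2 := val_repr h0 hfin hδ1 hsym hψ i k hi hk
  have hv : (Quotient.mk (RootSetoid (rootT0 Γ 1 1 0) (tauFun Γ 1 1 0))
      ⟨(i,k), hi, hk⟩ : RootV (rootT0 Γ 1 1 0) (tauFun Γ 1 1 0)) =
      rootMk (rootT0 Γ 1 1 0) (tauFun Γ 1 1 0) i k hi hk := rfl
  rw [hv, h1, h2]
  by_cases hpar : i % 2 = 0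
  · rw [if_pos hpar, if_pos hpar, h (i/2) (by omega)]
  · rw [if_neg hpar, if_neg hpar, h (i/2 + 1) (by omega)]

-- tower membership of the differences
include h0 hfin hδ1 hsym in
lemma mem0 {φ : RootV (rootT0 Γ 1 1 0) (tauFun Γ 1 1 0) → TPlus}
    (hφ : φ ∈ Hmod (rootAdj (rootT0 Γ 1 1 0) (tauFun Γ 1 1 0))
      (rootχ (rootT0 Γ 1 1 0) (tauFun Γ 1 1 0))) :
    Lv hδ1 φ (sdelta Γ) - Lv hδ1 φ (sdelta Γ - 1) ∈ Tower (salpha Γ (sdelta Γ - 1)) := by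
  have hm := merge h0 hfin hδ1 hsym hφ (t := sdelta Γ - 1) (by omega)
  rw [expA_right (Γ := Γ) (le_refl (sdelta Γ - 1))] at hm
  rw [show sdelta Γ - 1 + 1 - sdelta Γ = 0 by omega, Nat.add_zero] at hm
  rw [show sdelta Γ - 1 + 1 = sdelta Γ by omega] at hm
  have := mem_tower_of_SU_eq (a := salpha Γ (sdelta Γ - 1)) (b := 0)
    (f := Lv hδ1 φ (sdelta Γ)) (g := Lv hδ1 φ (sdelta Γ - 1)) (by rw [Nat.add_zero]; exact hm.symm)
  rwa [SU_zero] at this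

include h0 hfin hδ1 hsym in
lemma memR {φ : RootV (rootT0 Γ 1 1 0) (tauFun Γ 1 1 0) → TPlus}
    (hφ : φ ∈ Hmod (rootAdj (rootT0 Γ 1 1 0) (tauFun Γ 1 1 0))
      (rootχ (rootT0 Γ 1 1 0) (tauFun Γ 1 1 0)))
    {j : ℕ} (hj : j < sdelta Γ - 1) :
    Lv hδ1 φ (sdelta Γ + j + 1) - SU (j+1) (Lv hδ1 φ (sdelta Γ + j))
      ∈ Tower (salpha Γ (sdelta Γ + j)) := by
  have hm := merge h0 hfin hδ1 hsym hφ (t := sdelta Γ + j) (by omega)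
  rw [expA_right (Γ := Γ) (by omega : sdelta Γ - 1 ≤ sdelta Γ + j)] at hm
  rw [show sdelta Γ + j + 1 - sdelta Γ = j + 1 by omega] at hm
  exact mem_tower_of_SU_eq (a := salpha Γ (sdelta Γ + j)) (b := j+1)
    (f := Lv hδ1 φ (sdelta Γ + j + 1)) (g := Lv hδ1 φ (sdelta Γ + j)) hm.symm

include h0 hfin hδ1 hsym in
lemma memL {φ : RootV (rootT0 Γ 1 1 0) (tauFun Γ 1 1 0) → TPlus}
    (hφ : φ ∈ Hmod (rootAdj (rootT0 Γ 1 1 0) (tauFun Γ 1 1 0))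
      (rootχ (rootT0 Γ 1 1 0) (tauFun Γ 1 1 0)))
    {j : ℕ} (hj : j < sdelta Γ - 1) :
    Lv hδ1 φ (sdelta Γ - 2 - j) - SU (j+1) (Lv hδ1 φ (sdelta Γ - 1 - j))
      ∈ Tower (salpha Γ (sdelta Γ + j)) := by
  have hm := merge h0 hfin hδ1 hsym hφ (t := sdelta Γ - 2 - j) (by omega)
  rw [expA_left h0 hfin hδ1 hsym hj] at hm
  have hα : salpha Γ (sdelta Γ - 2 - j) = salpha Γ (sdelta Γ + j) + (j + 1) := by
    have hi : sdelta Γ - 1 - (j+1) = sdelta Γ - 2 - j := by omega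
    have hsymα := salpha_sym h0 hfin hδ1 hsym (i := j + 1) (by omega)
    rw [hi] at hsymα
    rw [hsymα, show sdelta Γ - 1 + (j + 1) = sdelta Γ + j by omega]
  rw [hα, show sdelta Γ - 2 - j + 1 = sdelta Γ - 1 - j by omega] at hm
  exact mem_tower_of_SU_eq (a := salpha Γ (sdelta Γ + j)) (b := j+1)
    (f := Lv hδ1 φ (sdelta Γ - 2 - j)) (g := Lv hδ1 φ (sdelta Γ - 1 - j)) hm

/-- the index/length data of the target module -/
abbrev lenF (Γ : Set ℕ) : Unit ⊕ (Fin (sdelta Γ - 1) × Fin 2) → ℕ :=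
  Sum.elim (fun _ : Unit => salpha Γ (sdelta Γ - 1))
    (fun x : Fin (sdelta Γ - 1) × Fin 2 => salpha Γ (sdelta Γ + x.1.val))

include h0 hfin hδ1 hsym in
lemma memIf {φ : RootV (rootT0 Γ 1 1 0) (tauFun Γ 1 1 0) → TPlus}
    (hφ : φ ∈ Hmod (rootAdj (rootT0 Γ 1 1 0) (tauFun Γ 1 1 0))
      (rootχ (rootT0 Γ 1 1 0) (tauFun Γ 1 1 0)))
    (x : Fin (sdelta Γ - 1) × Fin 2) :
    (if x.2.val = 0
      then Lv hδ1 φ (sdelta Γ - 2 - x.1.val) - SU (x.1.val+1) (Lv hδ1 φ (sdelta Γ - 1 - x.1.val))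
      else Lv hδ1 φ (sdelta Γ + x.1.val + 1) - SU (x.1.val+1) (Lv hδ1 φ (sdelta Γ + x.1.val)))
      ∈ Tower (salpha Γ (sdelta Γ + x.1.val)) := by
  split_ifs with hc
  · exact memL h0 hfin hδ1 hsym hφ x.1.isLt
  · exact memR h0 hfin hδ1 hsym hφ x.1.isLt

/-- middle difference -/
def diff0 (hδ1 : 1 ≤ sdelta Γ) (φ : RootV (rootT0 Γ 1 1 0) (tauFun Γ 1 1 0) → TPlus) : TPlus :=
  Lv hδ1 φ (sdelta Γ) - Lv hδ1 φ (sdelta Γ - 1)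

/-- side differences -/
def diffX (hδ1 : 1 ≤ sdelta Γ) (φ : RootV (rootT0 Γ 1 1 0) (tauFun Γ 1 1 0) → TPlus)
    (x : Fin (sdelta Γ - 1) × Fin 2) : TPlus :=
  if x.2.val = 0
    then Lv hδ1 φ (sdelta Γ - 2 - x.1.val) - SU (x.1.val+1) (Lv hδ1 φ (sdelta Γ - 1 - x.1.val))
    else Lv hδ1 φ (sdelta Γ + x.1.val + 1) - SU (x.1.val+1) (Lv hδ1 φ (sdelta Γ + x.1.val))

omit h0 hfin hsym in
lemma diff0_add (φ ψ : RootV (rootT0 Γ 1 1 0) (tauFun Γ 1 1 0) → TPlus) :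
    diff0 hδ1 (φ + ψ) = diff0 hδ1 φ + diff0 hδ1 ψ := by
  unfold diff0
  rw [Lv_add hδ1, Lv_add hδ1]
  abel

omit h0 hfin hsym in
lemma diff0_smul (c : ℤ) (φ : RootV (rootT0 Γ 1 1 0) (tauFun Γ 1 1 0) → TPlus) :
    diff0 hδ1 (c • φ) = c • diff0 hδ1 φ := by
  unfold diff0
  rw [Lv_smul hδ1, Lv_smul hδ1, smul_sub]

omit h0 hfin hsym in
lemma diffX_add (φ ψ : RootV (rootT0 Γ 1 1 0) (tauFun Γ 1 1 0) → TPlus)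
    (x : Fin (sdelta Γ - 1) × Fin 2) :
    diffX hδ1 (φ + ψ) x = diffX hδ1 φ x + diffX hδ1 ψ x := by
  unfold diffX
  split_ifs
  · rw [Lv_add hδ1, Lv_add hδ1, SU_add]
    abel
  · rw [Lv_add hδ1, Lv_add hδ1, SU_add]
    abel

omit h0 hfin hsym in
lemma diffX_smul (c : ℤ) (φ : RootV (rootT0 Γ 1 1 0) (tauFun Γ 1 1 0) → TPlus)
    (x : Fin (sdelta Γ - 1) × Fin 2) :
    diffX hδ1 (c • φ) x = c • diffX hδ1 φ x := by
  unfold diffX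
  split_ifs
  · rw [Lv_smul hδ1, Lv_smul hδ1, SU_smul, smul_sub]
  · rw [Lv_smul hδ1, Lv_smul hδ1, SU_smul, smul_sub]

include h0 hfin hδ1 hsym in
lemma memX {φ : RootV (rootT0 Γ 1 1 0) (tauFun Γ 1 1 0) → TPlus}
    (hφ : φ ∈ Hmod (rootAdj (rootT0 Γ 1 1 0) (tauFun Γ 1 1 0))
      (rootχ (rootT0 Γ 1 1 0) (tauFun Γ 1 1 0)))
    (x : Fin (sdelta Γ - 1) × Fin 2) :
    diffX hδ1 φ x ∈ Tower (salpha Γ (sdelta Γ + x.1.val)) := by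
  unfold diffX
  split_ifs
  · exact memL h0 hfin hδ1 hsym hφ x.1.isLt
  · exact memR h0 hfin hδ1 hsym hφ x.1.isLt

/-- the forward linear map -/
def forwardL : Hmod (rootAdj (rootT0 Γ 1 1 0) (tauFun Γ 1 1 0))
      (rootχ (rootT0 Γ 1 1 0) (tauFun Γ 1 1 0)) →ₗ[ℤ] Targ (lenF Γ) where
  toFun φ :=
    ⟨Lv hδ1 φ.1 (sdelta Γ - 1), fun i =>
      match i with
      | Sum.inl _ => ⟨diff0 hδ1 φ.1, mem0 h0 hfin hδ1 hsym φ.2⟩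
      | Sum.inr x => ⟨diffX hδ1 φ.1 x, memX h0 hfin hδ1 hsym φ.2 x⟩⟩
  map_add' φ ψ := by
    have hco : ((φ + ψ : Hmod (rootAdj (rootT0 Γ 1 1 0) (tauFun Γ 1 1 0))
        (rootχ (rootT0 Γ 1 1 0) (tauFun Γ 1 1 0))) :
        RootV (rootT0 Γ 1 1 0) (tauFun Γ 1 1 0) → TPlus) = ↑φ + ↑ψ := rfl
    refine Prod.ext rfl ?_
    funext i
    apply Subtype.ext
    rcases i with _ | x
    · show diff0 hδ1 ((φ + ψ : _) : _) = diff0 hδ1 φ.1 + diff0 hδ1 ψ.1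
      rw [hco, diff0_add hδ1]
    · show diffX hδ1 ((φ + ψ : _) : _) x = diffX hδ1 φ.1 x + diffX hδ1 ψ.1 x
      rw [hco, diffX_add hδ1]
  map_smul' c φ := by
    have hco : ((c • φ : Hmod (rootAdj (rootT0 Γ 1 1 0) (tauFun Γ 1 1 0))
        (rootχ (rootT0 Γ 1 1 0) (tauFun Γ 1 1 0))) :
        RootV (rootT0 Γ 1 1 0) (tauFun Γ 1 1 0) → TPlus) = c • (φ : _) := rfl
    refine Prod.ext rfl ?_
    funext i
    apply Subtype.ext
    rcases i with _ | x
    · show diff0 hδ1 ((c • φ : _) : _) = c • diff0 hδ1 φ.1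
      rw [hco, diff0_smul hδ1]
    · show diffX hδ1 ((c • φ : _) : _) x = c • diffX hδ1 φ.1 x
      rw [hco, diffX_smul hδ1]

end Fwd
end HFAux
end
-- AUX part 7: backward construction and bijectivity
noncomputable section
namespace HFAux
section Bwd
variable {Γ : Set ℕ} (h0 : 0 ∈ Γ) (hfin : Γᶜ.Finite) (hδ1 : 1 ≤ sdelta Γ)
  (hsym : ∀ k : ℕ, k ≤ 2 * sdelta Γ - 1 → (k ∈ Γ ↔ (2 * sdelta Γ - 1 - k) ∉ Γ))

/-- right recursion -/
def gR (F h00 : TPlus) (hR : ℕ → TPlus) : ℕ → TPlus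
  | 0 => F + h00
  | (j+1) => SU (j+1) (gR F h00 hR j) + hR j

/-- left recursion -/
def gL (F : TPlus) (hL : ℕ → TPlus) : ℕ → TPlus
  | 0 => F
  | (j+1) => SU (j+1) (gL F hL j) + hL j

/-- the leaf values determined by the data `(F, h00, hL, hR)` -/
def gg (Γ : Set ℕ) (F h00 : TPlus) (hL hR : ℕ → TPlus) : ℕ → TPlus := fun t =>
  if t ≤ sdelta Γ - 1 then gL F hL (sdelta Γ - 1 - t) else gR F h00 hR (t - sdelta Γ)

/-- the bottom values (at all path indices) -/
def ff (Γ : Set ℕ) (F h00 : TPlus) (hL hR : ℕ → TPlus) : ℕ → TPlus := fun i =>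
  if i % 2 = 0 then gg Γ F h00 hL hR (i/2)
  else SU (salpha Γ (i/2)) (gg Γ F h00 hL hR (i/2 + 1))

section ggvals
variable (F h00 : TPlus) (hL hR : ℕ → TPlus)

omit h0 hfin hsym in
lemma gg_mid1 : gg Γ F h00 hL hR (sdelta Γ - 1) = F := by
  rw [gg, if_pos le_rfl, Nat.sub_self]
  rfl

omit h0 hfin hsym in
include hδ1 in
lemma gg_mid2 : gg Γ F h00 hL hR (sdelta Γ) = F + h00 := by
  rw [gg, if_neg (by omega), Nat.sub_self]
  rfl

omit h0 hfin hsym in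
include hδ1 in
lemma gg_right (j : ℕ) : gg Γ F h00 hL hR (sdelta Γ + j + 1)
    = SU (j+1) (gg Γ F h00 hL hR (sdelta Γ + j)) + hR j := by
  rw [gg, gg, if_neg (by omega), if_neg (by omega),
    show sdelta Γ + j + 1 - sdelta Γ = j + 1 by omega,
    show sdelta Γ + j - sdelta Γ = j by omega]
  rfl

omit h0 hfin hsym in
lemma gg_left {j : ℕ} (hj : j < sdelta Γ - 1) : gg Γ F h00 hL hR (sdelta Γ - 2 - j)
    = SU (j+1) (gg Γ F h00 hL hR (sdelta Γ - 1 - j)) + hL j := by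
  rw [gg, gg, if_pos (by omega), if_pos (by omega),
    show sdelta Γ - 1 - (sdelta Γ - 2 - j) = j + 1 by omega,
    show sdelta Γ - 1 - (sdelta Γ - 1 - j) = j by omega]
  rfl

end ggvals

section ggc
variable {F h00 : TPlus} {hL hR : ℕ → TPlus}
  (hm0 : h00 ∈ Tower (salpha Γ (sdelta Γ - 1)))
  (hmL : ∀ j, j < sdelta Γ - 1 → hL j ∈ Tower (salpha Γ (sdelta Γ + j)))
  (hmR : ∀ j, j < sdelta Γ - 1 → hR j ∈ Tower (salpha Γ (sdelta Γ + j)))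

include h0 hfin hδ1 hsym hm0 hmL hmR in
lemma gg_compat {t : ℕ} (ht : t ≤ 2 * sdelta Γ - 2) :
    SU (tauFun Γ 1 1 0 (2*t+1) - tauFun Γ 1 1 0 (2*t)).toNat (gg Γ F h00 hL hR t)
      = SU (salpha Γ t) (gg Γ F h00 hL hR (t+1)) := by
  rcases lt_trichotomy t (sdelta Γ - 1) with hlt | heq | hgt
  · -- left side
    obtain ⟨j, rfl, hj⟩ : ∃ j, t = sdelta Γ - 2 - j ∧ j < sdelta Γ - 1 :=
      ⟨sdelta Γ - 2 - t, by omega, by omega⟩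
    rw [expA_left h0 hfin hδ1 hsym hj]
    rw [gg_left F h00 hL hR hj,
      show sdelta Γ - 2 - j + 1 = sdelta Γ - 1 - j by omega]
    rw [SU_add, SU_SU]
    rw [SU_eq_zero_of_mem_Tower (hmL j hj), add_zero]
    congr 1
    have hi : sdelta Γ - 1 - (j+1) = sdelta Γ - 2 - j := by omega
    have hsymα := salpha_sym h0 hfin hδ1 hsym (i := j + 1) (by omega)
    rw [hi] at hsymα
    rw [hsymα, show sdelta Γ - 1 + (j + 1) = sdelta Γ + j by omega]
  · subst heq
    rw [expA_right (Γ := Γ) le_rfl,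
      show sdelta Γ - 1 + 1 - sdelta Γ = 0 by omega, Nat.add_zero]
    rw [gg_mid1, show sdelta Γ - 1 + 1 = sdelta Γ by omega, gg_mid2 hδ1]
    rw [SU_add, SU_eq_zero_of_mem_Tower hm0, add_zero]
  · -- right side
    obtain ⟨j, rfl, hj⟩ : ∃ j, t = sdelta Γ + j ∧ j < sdelta Γ - 1 :=
      ⟨t - sdelta Γ, by omega, by omega⟩
    rw [expA_right (Γ := Γ) (by omega),
      show sdelta Γ + j + 1 - sdelta Γ = j + 1 by omega]
    rw [gg_right hδ1 F h00 hL hR j]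
    rw [SU_add, SU_SU, SU_eq_zero_of_mem_Tower (hmR j hj), add_zero]

include h0 hfin hδ1 hsym hm0 hmL hmR in
lemma ff_compat : Compat (rootT0 Γ 1 1 0) (tauFun Γ 1 1 0) (ff Γ F h00 hL hR) := by
  constructor
  intro i hi1 k hk1 hk2
  have hT : rootT0 Γ 1 1 0 = 4 * sdelta Γ - 2 := rootT0_eq hδ1
  by_cases hpar : i % 2 = 0
  · obtain ⟨t, rfl⟩ : ∃ t, i = 2*t := ⟨i/2, by omega⟩
    have ht : t ≤ 2 * sdelta Γ - 2 := by omega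
    have hf1 : ff Γ F h00 hL hR (2*t) = gg Γ F h00 hL hR t := by
      rw [ff, if_pos (by omega), show 2*t/2 = t by omega]
    have hf2 : ff Γ F h00 hL hR (2*t+1)
        = SU (salpha Γ t) (gg Γ F h00 hL hR (t+1)) := by
      rw [ff, if_neg (by omega), show (2*t+1)/2 = t by omega]
    rw [hf1, hf2, SU_SU]
    have hkey := key1 h0 hfin hδ1 hsym ht
    have hsplit : (k - tauFun Γ 1 1 0 (2*t)).toNat
        = (k - tauFun Γ 1 1 0 (2*t+1)).toNat
          + (tauFun Γ 1 1 0 (2*t+1) - tauFun Γ 1 1 0 (2*t)).toNat := by omega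
    rw [hsplit, ← SU_SU, gg_compat h0 hfin hδ1 hsym hm0 hmL hmR ht, SU_SU]
  · obtain ⟨t, rfl⟩ : ∃ t, i = 2*t+1 := ⟨i/2, by omega⟩
    have hf1 : ff Γ F h00 hL hR (2*t+1)
        = SU (salpha Γ t) (gg Γ F h00 hL hR (t+1)) := by
      rw [ff, if_neg (by omega), show (2*t+1)/2 = t by omega]
    have hf2 : ff Γ F h00 hL hR (2*t+1+1) = gg Γ F h00 hL hR (t+1) := by
      rw [ff, if_pos (by omega), show (2*t+1+1)/2 = t+1 by omega]
    rw [hf1, hf2, SU_SU]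
    congr 1
    have hB : tauFun Γ 1 1 0 (2*t+1) - tauFun Γ 1 1 0 (2*t+1+1) = salpha Γ t := by
      have := expB (Γ := Γ) t
      have h2 : tauFun Γ 1 1 0 (2*(t+1)) ≤ tauFun Γ 1 1 0 (2*t+1) := by
        rw [tau_even, tau_odd]
        have : (0:ℤ) ≤ salpha Γ t := by positivity
        omega
      rw [show 2*t+1+1 = 2*t+2 by omega]
      rw [show (2:ℕ)*t+2 = 2*(t+1) by ring] at this ⊢
      rw [tau_even, tau_odd] at this ⊢
      omega
    omega
end ggc
end Bwd
end HFAux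
end
-- AUX part 8: injectivity and surjectivity of forwardL
noncomputable section
namespace HFAux
section Bij
variable {Γ : Set ℕ} (h0 : 0 ∈ Γ) (hfin : Γᶜ.Finite) (hδ1 : 1 ≤ sdelta Γ)
  (hsym : ∀ k : ℕ, k ≤ 2 * sdelta Γ - 1 → (k ∈ Γ ↔ (2 * sdelta Γ - 1 - k) ∉ Γ))

omit h0 hfin hsym in
lemma Lv_mid_eq (φ : RootV (rootT0 Γ 1 1 0) (tauFun Γ 1 1 0) → TPlus) :
    Lv hδ1 φ (sdelta Γ) = Lv hδ1 φ (sdelta Γ - 1) + diff0 hδ1 φ := by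
  rw [diff0]; abel

omit h0 hfin hsym in
lemma Lv_right_eq (φ : RootV (rootT0 Γ 1 1 0) (tauFun Γ 1 1 0) → TPlus)
    (j : ℕ) (hj : j < sdelta Γ - 1) :
    Lv hδ1 φ (sdelta Γ + j + 1)
      = SU (j+1) (Lv hδ1 φ (sdelta Γ + j)) + diffX hδ1 φ (⟨j, hj⟩, 1) := by
  rw [diffX]
  split_ifs with hc
  · simp at hc
  · abel

omit h0 hfin hsym in
lemma Lv_left_eq (φ : RootV (rootT0 Γ 1 1 0) (tauFun Γ 1 1 0) → TPlus)
    (j : ℕ) (hj : j < sdelta Γ - 1) :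
    Lv hδ1 φ (sdelta Γ - 2 - j)
      = SU (j+1) (Lv hδ1 φ (sdelta Γ - 1 - j)) + diffX hδ1 φ (⟨j, hj⟩, 0) := by
  rw [diffX]
  split_ifs with hc
  · abel
  · simp at hc

include h0 hfin hδ1 hsym in
lemma forward_inj : Function.Injective (forwardL h0 hfin hδ1 hsym) := by
  intro φ ψ h
  have hfst : Lv hδ1 φ.1 (sdelta Γ - 1) = Lv hδ1 ψ.1 (sdelta Γ - 1) := congrArg Prod.fst h
  have hsnd := congrArg Prod.snd h
  have h1 : diff0 hδ1 φ.1 = diff0 hδ1 ψ.1 := Subtype.ext_iff.1 (congrFun hsnd (Sum.inl ()))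
  have h2 : ∀ x, diffX hδ1 φ.1 x = diffX hδ1 ψ.1 x :=
    fun x => Subtype.ext_iff.1 (congrFun hsnd (Sum.inr x))
  have hT : rootT0 Γ 1 1 0 = 4 * sdelta Γ - 2 := rootT0_eq hδ1
  have hLrec : ∀ j, j ≤ sdelta Γ - 1 →
      Lv hδ1 φ.1 (sdelta Γ - 1 - j) = Lv hδ1 ψ.1 (sdelta Γ - 1 - j) := by
    intro j
    induction j with
    | zero => intro _; simpa using hfst
    | succ j ih =>
        intro hj
        have hj' : j < sdelta Γ - 1 := by omega
        rw [show sdelta Γ - 1 - (j+1) = sdelta Γ - 2 - j by omega,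
          Lv_left_eq hδ1 φ.1 j hj', Lv_left_eq hδ1 ψ.1 j hj', ih (by omega), h2]
  have hRrec : ∀ j, j ≤ sdelta Γ - 1 →
      Lv hδ1 φ.1 (sdelta Γ + j) = Lv hδ1 ψ.1 (sdelta Γ + j) := by
    intro j
    induction j with
    | zero =>
        intro _
        rw [show sdelta Γ + 0 = sdelta Γ by omega, Lv_mid_eq hδ1, Lv_mid_eq hδ1, hfst, h1]
    | succ j ih =>
        intro hj
        have hj' : j < sdelta Γ - 1 := by omega
        rw [show sdelta Γ + (j+1) = sdelta Γ + j + 1 by omega,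
          Lv_right_eq hδ1 φ.1 j hj', Lv_right_eq hδ1 ψ.1 j hj', ih (by omega), h2]
  apply Subtype.ext
  apply leaf_det h0 hfin hδ1 hsym φ.2 ψ.2
  intro t ht
  rcases le_or_gt t (sdelta Γ - 1) with hle | hgt
  · have := hLrec (sdelta Γ - 1 - t) (by omega)
    rwa [show sdelta Γ - 1 - (sdelta Γ - 1 - t) = t by omega] at this
  · have := hRrec (t - sdelta Γ) (by omega)
    rwa [show sdelta Γ + (t - sdelta Γ) = t by omega] at this

include h0 hfin hδ1 hsym in
lemma forward_surj : Function.Surjective (forwardL h0 hfin hδ1 hsym) := by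
  intro y
  have hT : rootT0 Γ 1 1 0 = 4 * sdelta Γ - 2 := rootT0_eq hδ1
  set F : TPlus := y.1 with hF
  set h00 : TPlus := ↑(y.2 (Sum.inl ())) with hh00
  set hLf : ℕ → TPlus := fun j =>
    if h : j < sdelta Γ - 1 then ↑(y.2 (Sum.inr (⟨j, h⟩, 0))) else 0 with hhLf
  set hRf : ℕ → TPlus := fun j =>
    if h : j < sdelta Γ - 1 then ↑(y.2 (Sum.inr (⟨j, h⟩, 1))) else 0 with hhRf
  have hm0 : h00 ∈ Tower (salpha Γ (sdelta Γ - 1)) := (y.2 (Sum.inl ())).2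
  have hmL : ∀ j, j < sdelta Γ - 1 → hLf j ∈ Tower (salpha Γ (sdelta Γ + j)) := by
    intro j hj
    rw [hhLf]
    simp only [dif_pos hj]
    exact (y.2 (Sum.inr (⟨j, hj⟩, 0))).2
  have hmR : ∀ j, j < sdelta Γ - 1 → hRf j ∈ Tower (salpha Γ (sdelta Γ + j)) := by
    intro j hj
    rw [hhRf]
    simp only [dif_pos hj]
    exact (y.2 (Sum.inr (⟨j, hj⟩, 1))).2
  have hc := ff_compat (F := F) h0 hfin hδ1 hsym hm0 hmL hmR
  refine ⟨⟨buildPhi hc, buildPhi_mem hc⟩, ?_⟩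
  have hLv : ∀ t, 2*t ≤ rootT0 Γ 1 1 0 →
      Lv hδ1 (buildPhi hc) t = gg Γ F h00 hLf hRf t := by
    intro t ht
    rw [Lv, leaf_eq hδ1 ht, buildPhi_mk hc, sub_self, Int.toNat_zero, SU_zero,
      ff, if_pos (by omega), show 2*t/2 = t by omega]
  refine Prod.ext ?_ ?_
  · show Lv hδ1 (buildPhi hc) (sdelta Γ - 1) = F
    rw [hLv (sdelta Γ - 1) (by omega), gg_mid1]
  · funext i
    apply Subtype.ext
    rcases i with u | x
    · cases u
      show diff0 hδ1 (buildPhi hc) = h00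
      rw [diff0, hLv (sdelta Γ) (by omega), hLv (sdelta Γ - 1) (by omega),
        gg_mid2 hδ1, gg_mid1]
      abel
    · obtain ⟨j, c⟩ := x
      have hj : j.val < sdelta Γ - 1 := j.isLt
      fin_cases c
      · show diffX hδ1 (buildPhi hc) (j, 0) = ↑(y.2 (Sum.inr (j, 0)))
        rw [diffX]
        rw [if_pos (show ((0 : Fin 2).val = 0) from rfl)]
        rw [hLv (sdelta Γ - 2 - j.val) (by omega), hLv (sdelta Γ - 1 - j.val) (by omega),
          gg_left F h00 hLf hRf hj]
        rw [show hLf j.val = ↑(y.2 (Sum.inr (⟨j.val, hj⟩, 0))) from by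
          rw [hhLf]; simp only [dif_pos hj]]
        rw [show (⟨j.val, hj⟩ : Fin (sdelta Γ - 1)) = j from Fin.ext rfl]
        abel
      · show diffX hδ1 (buildPhi hc) (j, 1) = ↑(y.2 (Sum.inr (j, 1)))
        rw [diffX]
        rw [if_neg (show ¬((1 : Fin 2).val = 0) from by norm_num)]
        rw [hLv (sdelta Γ + j.val + 1) (by omega), hLv (sdelta Γ + j.val) (by omega),
          gg_right hδ1 F h00 hLf hRf j.val]
        rw [show hRf j.val = ↑(y.2 (Sum.inr (⟨j.val, hj⟩, 1))) from by
          rw [hhRf]; simp only [dif_pos hj]]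
        rw [show (⟨j.val, hj⟩ : Fin (sdelta Γ - 1)) = j from Fin.ext rfl]
        abel

end Bij
end HFAux
end
-- AUX part 9: homogeneity
noncomputable section
namespace HFAux
section Hom
variable {Γ : Set ℕ} (h0 : 0 ∈ Γ) (hfin : Γᶜ.Finite) (hδ1 : 1 ≤ sdelta Γ)
  (hsym : ∀ k : ℕ, k ≤ 2 * sdelta Γ - 1 → (k ∈ Γ ↔ (2 * sdelta Γ - 1 - k) ∉ Γ))

lemma toNat_castQ {a : ℤ} (h : 0 ≤ a) : ((a.toNat : ℚ)) = (a : ℚ) := by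
  exact_mod_cast congrArg (fun z : ℤ => (z : ℚ)) (Int.toNat_of_nonneg h)

omit h0 hfin hδ1 hsym in
lemma Zr (i : ℕ) :
    2 * ((tauFun Γ 1 1 0 (2*(sdelta Γ + i)) : ℤ) : ℚ)
      + (sdelta Γ : ℚ) * ((sdelta Γ : ℚ) - 1) = i*(i+1) := by
  rw [tau_even]
  have h2 := tauEven_two (Γ := Γ) (sdelta Γ + i)
  have h2q : 2 * ((tauEven Γ 1 1 0 (sdelta Γ + i) : ℤ) : ℚ)
      = ((sdelta Γ : ℚ) + i) * (((sdelta Γ : ℚ) + i) + 1)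
        - 2 * ((sdelta Γ : ℚ) + i) * (sdelta Γ : ℚ) := by
    exact_mod_cast h2
  linear_combination h2q

omit h0 hfin hsym in
include hδ1 in
lemma Zl {i : ℕ} (hi : i ≤ sdelta Γ - 1) :
    2 * ((tauFun Γ 1 1 0 (2*(sdelta Γ - 1 - i)) : ℤ) : ℚ)
      + (sdelta Γ : ℚ) * ((sdelta Γ : ℚ) - 1) = i*(i+1) := by
  rw [tau_even]
  have h2 := tauEven_two (Γ := Γ) (sdelta Γ - 1 - i)
  have h2q : 2 * ((tauEven Γ 1 1 0 (sdelta Γ - 1 - i) : ℤ) : ℚ)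
      = ((sdelta Γ - 1 - i : ℕ) : ℚ) * (((sdelta Γ - 1 - i : ℕ) : ℚ) + 1)
        - 2 * ((sdelta Γ - 1 - i : ℕ) : ℚ) * (sdelta Γ : ℚ) := by
    exact_mod_cast h2
  have hc : ((sdelta Γ - 1 - i : ℕ) : ℚ) = (sdelta Γ : ℚ) - 1 - i := by
    have h4 : ((sdelta Γ - 1 - i : ℕ) : ℤ) = (sdelta Γ : ℤ) - 1 - i := by omega
    exact_mod_cast congrArg (fun z : ℤ => (z : ℚ)) h4
  rw [hc] at h2q
  linear_combination h2q

omit h0 hfin hsym in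
lemma HHomog_leaf {φ : RootV (rootT0 Γ 1 1 0) (tauFun Γ 1 1 0) → TPlus} {r d : ℚ}
    (hH : HHomog (rootχ (rootT0 Γ 1 1 0) (tauFun Γ 1 1 0)) r d φ)
    {t : ℕ} (ht : 2*t ≤ rootT0 Γ 1 1 0) :
    THomog (2 * ((tauFun Γ 1 1 0 (2*t) : ℤ) : ℚ) + r) d (Lv hδ1 φ t) := by
  rw [Lv, leaf_eq hδ1 ht]
  have h1 := hH (rootMk (rootT0 Γ 1 1 0) (tauFun Γ 1 1 0) (2*t) (tauFun Γ 1 1 0 (2*t))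
    ht le_rfl)
  rw [rootχ_mk] at h1
  exact h1

include h0 hfin hδ1 hsym in
lemma HHomog_of_leaves {φ : RootV (rootT0 Γ 1 1 0) (tauFun Γ 1 1 0) → TPlus} {r d : ℚ}
    (hφ : φ ∈ Hmod (rootAdj (rootT0 Γ 1 1 0) (tauFun Γ 1 1 0))
      (rootχ (rootT0 Γ 1 1 0) (tauFun Γ 1 1 0)))
    (hL : ∀ t, 2*t ≤ rootT0 Γ 1 1 0 →
      THomog (2 * ((tauFun Γ 1 1 0 (2*t) : ℤ) : ℚ) + r) d (Lv hδ1 φ t)) :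
    HHomog (rootχ (rootT0 Γ 1 1 0) (tauFun Γ 1 1 0)) r d φ := by
  have hT : rootT0 Γ 1 1 0 = 4 * sdelta Γ - 2 := rootT0_eq hδ1
  intro v
  refine Quotient.inductionOn v ?_
  rintro ⟨⟨i, k⟩, hi, hk⟩
  have hi' : i ≤ rootT0 Γ 1 1 0 := hi
  have hk' : tauFun Γ 1 1 0 i ≤ k := hk
  have hrepr := val_repr h0 hfin hδ1 hsym hφ i k hi hk
  show THomog (2 * ((k : ℤ) : ℚ) + r) d
    (φ (rootMk (rootT0 Γ 1 1 0) (tauFun Γ 1 1 0) i k hi hk))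
  rw [hrepr]
  by_cases hpar : i % 2 = 0
  · rw [if_pos hpar]
    have hb := hL (i/2) (by omega)
    rw [show 2*(i/2) = i by omega] at hb
    refine THomog_congr ?_ (THomog_SU _ hb)
    rw [toNat_castQ (by omega)]
    push_cast
    ring
  · rw [if_neg hpar]
    have hb := hL (i/2 + 1) (by omega)
    have hodd : tauFun Γ 1 1 0 i
        = tauFun Γ 1 1 0 (2*(i/2+1)) + (salpha Γ (i/2) : ℤ) := by
      obtain ⟨t, rfl⟩ : ∃ t, i = 2*t+1 := ⟨i/2, by omega⟩
      rw [show (2*t+1)/2 = t by omega, tau_odd, show (2:ℕ)*(t+1) = 2*t+2 by ring,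
        show (2:ℕ)*t+2 = 2*(t+1) by ring, tau_even]
    refine THomog_congr ?_ (THomog_SU _ (THomog_SU _ hb))
    rw [toNat_castQ (by omega)]
    have hoddq : ((tauFun Γ 1 1 0 i : ℤ) : ℚ)
        = ((tauFun Γ 1 1 0 (2*(i/2+1)) : ℤ) : ℚ) + (salpha Γ (i/2) : ℚ) := by
      exact_mod_cast congrArg (fun z : ℤ => (z : ℚ)) hodd
    push_cast at hoddq ⊢
    linarith

-- the grading data of the target
abbrev rIF (Γ : Set ℕ) : Unit ⊕ (Fin (sdelta Γ - 1) × Fin 2) → ℚ :=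
  Sum.elim (fun _ : Unit => (0 : ℚ))
    (fun x : Fin (sdelta Γ - 1) × Fin 2 => ((x.1.val : ℚ) + 1) * ((x.1.val : ℚ) + 2))

include h0 hfin hδ1 hsym in
lemma homog_iff (d : ℚ)
    (φ : Hmod (rootAdj (rootT0 Γ 1 1 0) (tauFun Γ 1 1 0))
      (rootχ (rootT0 Γ 1 1 0) (tauFun Γ 1 1 0))) :
    HHomog (rootχ (rootT0 Γ 1 1 0) (tauFun Γ 1 1 0))
        ((sdelta Γ : ℚ) * ((sdelta Γ : ℚ) - 1)) d φ.1
      ↔ TargHomog 0 (rIF Γ) d (forwardL h0 hfin hδ1 hsym φ) := by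
  have hT : rootT0 Γ 1 1 0 = 4 * sdelta Γ - 2 := rootT0_eq hδ1
  have hZl0 : 2 * ((tauFun Γ 1 1 0 (2*(sdelta Γ - 1)) : ℤ) : ℚ)
      + (sdelta Γ : ℚ) * ((sdelta Γ : ℚ) - 1) = 0 := by
    have h := Zl (Γ := Γ) hδ1 (i := 0) (by omega)
    rw [show sdelta Γ - 1 - 0 = sdelta Γ - 1 by omega] at h
    rw [h]
    norm_num
  have hZr0 : 2 * ((tauFun Γ 1 1 0 (2*(sdelta Γ)) : ℤ) : ℚ)
      + (sdelta Γ : ℚ) * ((sdelta Γ : ℚ) - 1) = 0 := by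
    have h := Zr (Γ := Γ) (i := 0)
    rw [show sdelta Γ + 0 = sdelta Γ by omega] at h
    rw [h]
    norm_num
  constructor
  · intro hH
    constructor
    · exact THomog_congr hZl0 (HHomog_leaf hδ1 hH (by omega))
    · intro i
      rcases i with u | x
      · show THomog 0 d (diff0 hδ1 φ.1)
        exact THomog_sub (THomog_congr hZr0 (HHomog_leaf hδ1 hH (by omega)))
          (THomog_congr hZl0 (HHomog_leaf hδ1 hH (by omega)))
      · show THomog (((x.1.val : ℚ) + 1) * ((x.1.val : ℚ) + 2)) d (diffX hδ1 φ.1 x)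
        have hj : x.1.val < sdelta Γ - 1 := x.1.isLt
        have hZlj := Zl (Γ := Γ) hδ1 (i := x.1.val) (by omega)
        have hZlj1 : 2 * ((tauFun Γ 1 1 0 (2*(sdelta Γ - 2 - x.1.val)) : ℤ) : ℚ)
            + (sdelta Γ : ℚ) * ((sdelta Γ : ℚ) - 1)
            = ((x.1.val : ℚ) + 1) * ((x.1.val : ℚ) + 2) := by
          have h := Zl (Γ := Γ) hδ1 (i := x.1.val + 1) (by omega)
          rw [show sdelta Γ - 1 - (x.1.val + 1) = sdelta Γ - 2 - x.1.val by omega] at h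
          rw [h]
          push_cast
          ring
        have hZrj := Zr (Γ := Γ) (i := x.1.val)
        have hZrj1 : 2 * ((tauFun Γ 1 1 0 (2*(sdelta Γ + x.1.val + 1)) : ℤ) : ℚ)
            + (sdelta Γ : ℚ) * ((sdelta Γ : ℚ) - 1)
            = ((x.1.val : ℚ) + 1) * ((x.1.val : ℚ) + 2) := by
          have h := Zr (Γ := Γ) (i := x.1.val + 1)
          rw [show sdelta Γ + (x.1.val + 1) = sdelta Γ + x.1.val + 1 by omega] at h
          rw [h]
          push_cast
          ring
        rw [diffX]
        split_ifs
        · refine THomog_sub (THomog_congr hZlj1 (HHomog_leaf hδ1 hH (by omega)))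
            (THomog_congr ?_ (THomog_SU _ (HHomog_leaf hδ1 hH (by omega))))
          push_cast
          linear_combination hZlj
        · refine THomog_sub (THomog_congr hZrj1 (HHomog_leaf hδ1 hH (by omega)))
            (THomog_congr ?_ (THomog_SU _ (HHomog_leaf hδ1 hH (by omega))))
          push_cast
          linear_combination hZrj
  · rintro ⟨hF, hcomp⟩
    have hF' : THomog 0 d (Lv hδ1 φ.1 (sdelta Γ - 1)) := hF
    have hd0 : THomog 0 d (diff0 hδ1 φ.1) := hcomp (Sum.inl ())
    have hdX : ∀ x : Fin (sdelta Γ - 1) × Fin 2,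
        THomog (((x.1.val : ℚ) + 1) * ((x.1.val : ℚ) + 2)) d (diffX hδ1 φ.1 x) :=
      fun x => hcomp (Sum.inr x)
    have hLrec : ∀ j, j ≤ sdelta Γ - 1 →
        THomog (2 * ((tauFun Γ 1 1 0 (2*(sdelta Γ - 1 - j)) : ℤ) : ℚ)
          + (sdelta Γ : ℚ) * ((sdelta Γ : ℚ) - 1)) d (Lv hδ1 φ.1 (sdelta Γ - 1 - j)) := by
      intro j
      induction j with
      | zero =>
          intro _
          simp only [Nat.sub_zero]
          exact THomog_congr hZl0.symm hF'
      | succ j ih =>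
          intro hj
          have hj' : j < sdelta Γ - 1 := by omega
          have hZa := Zl (Γ := Γ) hδ1 (i := j) (by omega)
          have hZb : 2 * ((tauFun Γ 1 1 0 (2*(sdelta Γ - 2 - j)) : ℤ) : ℚ)
              + (sdelta Γ : ℚ) * ((sdelta Γ : ℚ) - 1)
              = ((j : ℚ) + 1) * ((j : ℚ) + 2) := by
            have h := Zl (Γ := Γ) hδ1 (i := j + 1) (by omega)
            rw [show sdelta Γ - 1 - (j + 1) = sdelta Γ - 2 - j by omega] at h
            rw [h]
            push_cast
            ring
          rw [show sdelta Γ - 1 - (j+1) = sdelta Γ - 2 - j by omega,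
            Lv_left_eq hδ1 φ.1 j hj']
          refine THomog_add (THomog_congr ?_ (THomog_SU _ (ih (by omega))))
            (THomog_congr ?_ (hdX (⟨j, hj'⟩, 0)))
          · push_cast
            linear_combination hZa - hZb
          · push_cast
            linear_combination - hZb
    have hRrec : ∀ j, j ≤ sdelta Γ - 1 →
        THomog (2 * ((tauFun Γ 1 1 0 (2*(sdelta Γ + j)) : ℤ) : ℚ)
          + (sdelta Γ : ℚ) * ((sdelta Γ : ℚ) - 1)) d (Lv hδ1 φ.1 (sdelta Γ + j)) := by
      intro j
      induction j with
      | zero =>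
          intro _
          simp only [Nat.add_zero]
          rw [Lv_mid_eq hδ1 φ.1]
          exact THomog_add (THomog_congr hZr0.symm hF') (THomog_congr hZr0.symm hd0)
      | succ j ih =>
          intro hj
          have hj' : j < sdelta Γ - 1 := by omega
          have hZa := Zr (Γ := Γ) (i := j)
          have hZb : 2 * ((tauFun Γ 1 1 0 (2*(sdelta Γ + j + 1)) : ℤ) : ℚ)
              + (sdelta Γ : ℚ) * ((sdelta Γ : ℚ) - 1)
              = ((j : ℚ) + 1) * ((j : ℚ) + 2) := by
            have h := Zr (Γ := Γ) (i := j + 1)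
            rw [show sdelta Γ + (j + 1) = sdelta Γ + j + 1 by omega] at h
            rw [h]
            push_cast
            ring
          rw [show sdelta Γ + (j+1) = sdelta Γ + j + 1 by omega,
            Lv_right_eq hδ1 φ.1 j hj']
          refine THomog_add (THomog_congr ?_ (THomog_SU _ (ih (by omega))))
            (THomog_congr ?_ (hdX (⟨j, hj'⟩, 1)))
          · push_cast
            linear_combination hZa - hZb
          · push_cast
            linear_combination - hZb
    apply HHomog_of_leaves h0 hfin hδ1 hsym φ.2
    intro t ht
    rcases le_or_gt t (sdelta Γ - 1) with hle | hgt
    · have h := hLrec (sdelta Γ - 1 - t) (by omega)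
      rwa [show sdelta Γ - 1 - (sdelta Γ - 1 - t) = t by omega] at h
    · have h := hRrec (t - sdelta Γ) (by omega)
      rwa [show sdelta Γ + (t - sdelta Γ) = t by omega] at h

end Hom
end HFAux
end
-- AUX part 10: U-equivariance; kernel
noncomputable section
namespace HFAux
section Equi
variable {Γ : Set ℕ} (h0 : 0 ∈ Γ) (hfin : Γᶜ.Finite) (hδ1 : 1 ≤ sdelta Γ)
  (hsym : ∀ k : ℕ, k ≤ 2 * sdelta Γ - 1 → (k ∈ Γ ↔ (2 * sdelta Γ - 1 - k) ∉ Γ))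

include h0 hfin hδ1 hsym in
lemma forward_equiv (φ : Hmod (rootAdj (rootT0 Γ 1 1 0) (tauFun Γ 1 1 0))
      (rootχ (rootT0 Γ 1 1 0) (tauFun Γ 1 1 0))) :
    forwardL h0 hfin hδ1 hsym
        (HU (rootAdj (rootT0 Γ 1 1 0) (tauFun Γ 1 1 0))
          (rootχ (rootT0 Γ 1 1 0) (tauFun Γ 1 1 0)) φ)
      = TargU (lenF Γ) (forwardL h0 hfin hδ1 hsym φ) := by
  have hLU : ∀ t, Lv hδ1 ((HU (rootAdj (rootT0 Γ 1 1 0) (tauFun Γ 1 1 0))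
      (rootχ (rootT0 Γ 1 1 0) (tauFun Γ 1 1 0)) φ).1) t = shiftU (Lv hδ1 φ.1 t) :=
    fun t => rfl
  refine Prod.ext rfl ?_
  funext i
  apply Subtype.ext
  rcases i with u | x
  · cases u
    show diff0 hδ1 _ = shiftU (diff0 hδ1 φ.1)
    rw [diff0, diff0, hLU, hLU, map_sub]
  · show diffX hδ1 _ x = shiftU (diffX hδ1 φ.1 x)
    rw [diffX, diffX]
    split_ifs
    · rw [hLU, hLU, map_sub, SU_shiftU, shiftU_SU]
    · rw [hLU, hLU, map_sub, SU_shiftU, shiftU_SU]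

end Equi

section Ker
variable {Γ : Set ℕ} (h0 : 0 ∈ Γ) (hfin : Γᶜ.Finite) (hδ1 : 1 ≤ sdelta Γ)
  (hsym : ∀ k : ℕ, k ≤ 2 * sdelta Γ - 1 → (k ∈ Γ ↔ (2 * sdelta Γ - 1 - k) ∉ Γ))

/-- leaf index attached to a kernel coordinate -/
def tIdx (Γ : Set ℕ) (ic : Fin (sdelta Γ) × Fin 2) : ℕ :=
  if ic.2.val = 0 then sdelta Γ - 1 - ic.1.val else sdelta Γ + ic.1.val

omit h0 hfin hsym in
lemma tIdx_le (ic : Fin (sdelta Γ) × Fin 2) : tIdx Γ ic ≤ 2 * sdelta Γ - 1 := by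
  have := ic.1.isLt
  rw [tIdx]
  split_ifs <;> omega

lemma SU_single_zero {m : ℕ} (hm : 1 ≤ m) (z : ℤ) :
    SU m (z • Finsupp.single 0 (1:ℤ)) = 0 := by
  ext h
  simp only [SU_apply, Finsupp.smul_apply, Finsupp.single_apply, Finsupp.coe_zero,
    Pi.zero_apply]
  rw [if_neg (by omega)]
  simp

set_option maxHeartbeats 1000000 in
/-- the kernel linear map -/
def kerF : LinearMap.ker (HU (rootAdj (rootT0 Γ 1 1 0) (tauFun Γ 1 1 0))
      (rootχ (rootT0 Γ 1 1 0) (tauFun Γ 1 1 0)))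
    →ₗ[ℤ] (Fin (sdelta Γ) × Fin 2 → ℤ) where
  toFun x := fun ic => Lv hδ1 x.1.1 (tIdx Γ ic) 0
  map_add' x y := by
    funext ic
    show Lv hδ1 ((x + y).1.1) (tIdx Γ ic) 0 = _
    have hco : (x + y).1.1 = x.1.1 + y.1.1 := rfl
    rw [hco, Lv_add hδ1, Finsupp.add_apply]
    rfl
  map_smul' c x := by
    funext ic
    show Lv hδ1 ((c • x).1.1) (tIdx Γ ic) 0 = _
    have hco : (c • x).1.1 = c • x.1.1 := rfl
    rw [hco, Lv_smul hδ1, Finsupp.smul_apply, smul_eq_mul]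
    rfl

set_option maxHeartbeats 1000000 in
omit h0 hfin hsym in
lemma kerF_apply (x : LinearMap.ker (HU (rootAdj (rootT0 Γ 1 1 0) (tauFun Γ 1 1 0))
      (rootχ (rootT0 Γ 1 1 0) (tauFun Γ 1 1 0)))) (ic : Fin (sdelta Γ) × Fin 2) :
    kerF (Γ := Γ) hδ1 x ic = Lv hδ1 x.1.1 (tIdx Γ ic) 0 := rfl

omit h0 hfin hsym in
lemma ker_shift {x : LinearMap.ker (HU (rootAdj (rootT0 Γ 1 1 0) (tauFun Γ 1 1 0))
      (rootχ (rootT0 Γ 1 1 0) (tauFun Γ 1 1 0)))}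
    (v : RootV (rootT0 Γ 1 1 0) (tauFun Γ 1 1 0)) (h : ℕ) :
    x.1.1 v (h + 1) = 0 := by
  have hm := LinearMap.mem_ker.1 x.2
  have hfun := congrArg Subtype.val hm
  have hv := congrFun hfun v
  have : shiftU (x.1.1 v) = 0 := hv
  calc x.1.1 v (h + 1) = shiftU (x.1.1 v) h := rfl
  _ = 0 := by rw [this]; rfl

include h0 hfin hδ1 hsym in
lemma kerF_inj : Function.Injective (kerF (Γ := Γ) hδ1) := by
  intro x y hxy
  apply Subtype.ext
  apply Subtype.ext
  apply leaf_det h0 hfin hδ1 hsym x.1.2 y.1.2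
  have hT : rootT0 Γ 1 1 0 = 4 * sdelta Γ - 2 := rootT0_eq hδ1
  intro t ht
  ext h
  match h with
  | Nat.succ h =>
      rw [show h.succ = h + 1 from rfl, Lv, ker_shift, Lv, ker_shift]
  | 0 =>
      rcases le_or_gt t (sdelta Γ - 1) with hle | hgt
      · have hic := congrFun hxy (⟨sdelta Γ - 1 - t, by omega⟩, 0)
        have htt : tIdx Γ (⟨sdelta Γ - 1 - t, by omega⟩, (0 : Fin 2)) = t := by
          rw [tIdx, if_pos (show ((0:Fin 2).val = 0) from rfl)]
          show sdelta Γ - 1 - (sdelta Γ - 1 - t) = t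
          omega
        rw [kerF_apply hδ1, kerF_apply hδ1, htt] at hic
        exact hic
      · have hic := congrFun hxy (⟨t - sdelta Γ, by omega⟩, 1)
        have htt : tIdx Γ (⟨t - sdelta Γ, by omega⟩, (1 : Fin 2)) = t := by
          rw [tIdx, if_neg (show ¬((1:Fin 2).val = 0) from by norm_num)]
          show sdelta Γ + (t - sdelta Γ) = t
          omega
        rw [kerF_apply hδ1, kerF_apply hδ1, htt] at hic
        exact hic

include h0 hfin hδ1 hsym in
lemma kerF_surj : Function.Surjective (kerF (Γ := Γ) hδ1) := by
  intro c
  have hT : rootT0 Γ 1 1 0 = 4 * sdelta Γ - 2 := rootT0_eq hδ1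
  set cval : ℕ → ℤ := fun t =>
    if h1 : t ≤ sdelta Γ - 1 then c (⟨sdelta Γ - 1 - t, by omega⟩, 0)
    else if h2 : t ≤ 2 * sdelta Γ - 1 then c (⟨t - sdelta Γ, by omega⟩, 1) else 0
    with hcval
  set gv : ℕ → TPlus := fun t => cval t • Finsupp.single 0 1 with hgv
  set ffc : ℕ → TPlus := fun i =>
    if i % 2 = 0 then gv (i/2) else SU (salpha Γ (i/2)) (gv (i/2+1)) with hffc
  have hcompat : Compat (rootT0 Γ 1 1 0) (tauFun Γ 1 1 0) ffc := by
    constructor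
    intro i hi1 k hk1 hk2
    by_cases hpar : i % 2 = 0
    · obtain ⟨t, rfl⟩ : ∃ t, i = 2*t := ⟨i/2, by omega⟩
      have ht : t ≤ 2 * sdelta Γ - 2 := by omega
      have hkey := key1 h0 hfin hδ1 hsym ht
      have hα := salpha_pos h0 hfin hδ1 hsym (t := t) (by omega)
      have hf1 : ffc (2*t) = gv t := by
        rw [hffc]
        simp only [if_pos (show 2*t % 2 = 0 by omega), show 2*t/2 = t by omega]
      have hf2 : ffc (2*t+1) = SU (salpha Γ t) (gv (t+1)) := by
        rw [hffc]
        simp only [if_neg (show ¬((2*t+1) % 2 = 0) by omega),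
          show (2*t+1)/2 = t by omega]
      rw [hf1, hf2, SU_SU, hgv]
      rw [SU_single_zero (by omega), SU_single_zero (by omega)]
    · obtain ⟨t, rfl⟩ : ∃ t, i = 2*t+1 := ⟨i/2, by omega⟩
      have ht : t ≤ 2 * sdelta Γ - 2 := by omega
      have hα := salpha_pos h0 hfin hδ1 hsym (t := t) (by omega)
      have hk2' : tauFun Γ 1 1 0 (2*t+1+1) < tauFun Γ 1 1 0 (2*t+1) := by
        have := key2 h0 hfin hδ1 hsym ht
        rwa [show 2*t+2 = 2*t+1+1 by omega] at this
      have hf1 : ffc (2*t+1) = SU (salpha Γ t) (gv (t+1)) := by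
        rw [hffc]
        simp only [if_neg (show ¬((2*t+1) % 2 = 0) by omega),
          show (2*t+1)/2 = t by omega]
      have hf2 : ffc (2*t+1+1) = gv (t+1) := by
        rw [hffc]
        simp only [if_pos (show (2*t+1+1) % 2 = 0 by omega),
          show (2*t+1+1)/2 = t+1 by omega]
      rw [hf1, hf2, SU_SU, hgv]
      rw [SU_single_zero (by omega), SU_single_zero (by omega)]
  have hmem := buildPhi_mem hcompat
  have hker : (⟨buildPhi hcompat, hmem⟩ : Hmod (rootAdj (rootT0 Γ 1 1 0) (tauFun Γ 1 1 0))
      (rootχ (rootT0 Γ 1 1 0) (tauFun Γ 1 1 0)))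
      ∈ LinearMap.ker (HU (rootAdj (rootT0 Γ 1 1 0) (tauFun Γ 1 1 0))
        (rootχ (rootT0 Γ 1 1 0) (tauFun Γ 1 1 0))) := by
    rw [LinearMap.mem_ker]
    apply Subtype.ext
    funext v
    refine Quotient.inductionOn v ?_
    rintro ⟨⟨i, k⟩, hi, hk⟩
    show shiftU (buildPhi hcompat
      (rootMk (rootT0 Γ 1 1 0) (tauFun Γ 1 1 0) i k hi hk)) = 0
    rw [buildPhi_mk hcompat, shiftU_SU]
    by_cases hpar : i % 2 = 0
    · rw [show ffc i = gv (i/2) from by rw [hffc]; simp only [if_pos hpar]]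
      rw [hgv]
      exact SU_single_zero (by omega) _
    · rw [show ffc i = SU (salpha Γ (i/2)) (gv (i/2+1)) from by
        rw [hffc]; simp only [if_neg hpar]]
      rw [SU_SU, hgv]
      exact SU_single_zero (by omega) _
  refine ⟨⟨⟨buildPhi hcompat, hmem⟩, hker⟩, ?_⟩
  funext ic
  have hLv : ∀ t, 2*t ≤ rootT0 Γ 1 1 0 → Lv hδ1 (buildPhi hcompat) t = gv t := by
    intro t ht2
    rw [Lv, leaf_eq hδ1 ht2, buildPhi_mk hcompat, sub_self, Int.toNat_zero, SU_zero]
    rw [show ffc (2*t) = gv (2*t/2) from by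
      rw [hffc]; simp only [if_pos (show 2*t % 2 = 0 by omega)]]
    rw [show 2*t/2 = t by omega]
  rw [kerF_apply hδ1]
  have hle := tIdx_le (Γ := Γ) ic
  rw [hLv (tIdx Γ ic) (by omega), hgv]
  have h1 : (cval (tIdx Γ ic) • Finsupp.single 0 (1:ℤ)) 0 = cval (tIdx Γ ic) := by
    simp
  rw [h1]
  obtain ⟨iF, cF⟩ := ic
  have hiF := iF.isLt
  by_cases hcF : cF = 0
  · subst hcF
    have htt : tIdx Γ (iF, (0 : Fin 2)) = sdelta Γ - 1 - iF.val := by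
      rw [tIdx, if_pos (show ((0:Fin 2).val = 0) from rfl)]
    rw [htt, hcval]
    simp only [dif_pos (show sdelta Γ - 1 - iF.val ≤ sdelta Γ - 1 by omega)]
    congr 1
    apply Prod.ext
    · apply Fin.ext
      show sdelta Γ - 1 - (sdelta Γ - 1 - iF.val) = iF.val
      omega
    · rfl
  · have hv : cF.val = 1 := by
      have hv0 : cF.val ≠ 0 := fun h => hcF (Fin.ext h)
      have h2 := cF.isLt
      omega
    have hv1 : cF = 1 := Fin.ext (by simp [hv])
    subst hv1
    have htt : tIdx Γ (iF, (1 : Fin 2)) = sdelta Γ + iF.val := by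
      rw [tIdx, if_neg (show ¬((1:Fin 2).val = 0) from by norm_num)]
    rw [htt, hcval]
    simp only [dif_neg (show ¬(sdelta Γ + iF.val ≤ sdelta Γ - 1) by omega),
      dif_pos (show sdelta Γ + iF.val ≤ 2 * sdelta Γ - 1 by omega)]
    congr 1
    apply Prod.ext
    · apply Fin.ext
      show sdelta Γ + iF.val - sdelta Γ = iF.val
      omega
    · rfl

include h0 hfin hδ1 hsym in
lemma ker_homog_iff (d : ℚ)
    (x : LinearMap.ker (HU (rootAdj (rootT0 Γ 1 1 0) (tauFun Γ 1 1 0))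
      (rootχ (rootT0 Γ 1 1 0) (tauFun Γ 1 1 0)))) :
    HHomog (rootχ (rootT0 Γ 1 1 0) (tauFun Γ 1 1 0))
        ((sdelta Γ : ℚ) * ((sdelta Γ : ℚ) - 1)) d x.1.1
      ↔ ∀ ic : Fin (sdelta Γ) × Fin 2,
          kerF (Γ := Γ) hδ1 x ic ≠ 0 → d = (ic.1.val : ℚ) ^ 2 + (ic.1.val : ℚ) := by
  have hT : rootT0 Γ 1 1 0 = 4 * sdelta Γ - 2 := rootT0_eq hδ1
  constructor
  · intro hH ic hne
    rw [kerF_apply hδ1] at hne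
    have hle := tIdx_le (Γ := Γ) ic
    have hleaf := HHomog_leaf hδ1 hH (t := tIdx Γ ic) (by omega)
    have hval := hleaf 0 hne
    by_cases hc : ic.2.val = 0
    · have htt : tIdx Γ ic = sdelta Γ - 1 - ic.1.val := by rw [tIdx, if_pos hc]
      rw [htt] at hval
      have hZ := Zl (Γ := Γ) hδ1 (i := ic.1.val) (by have := ic.1.isLt; omega)
      push_cast at hval ⊢
      linear_combination hZ - hval
    · have htt : tIdx Γ ic = sdelta Γ + ic.1.val := by rw [tIdx, if_neg hc]
      rw [htt] at hval
      have hZ := Zr (Γ := Γ) (i := ic.1.val)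
      push_cast at hval ⊢
      linear_combination hZ - hval
  · intro hc
    apply HHomog_of_leaves h0 hfin hδ1 hsym x.1.2
    intro t ht h hne
    match h with
    | Nat.succ h =>
        exfalso
        rw [Lv, show h.succ = h + 1 from rfl, ker_shift] at hne
        exact hne rfl
    | 0 =>
        rcases le_or_gt t (sdelta Γ - 1) with hle | hgt
        · have htt : tIdx Γ (⟨sdelta Γ - 1 - t, by omega⟩, (0:Fin 2)) = t := by
            rw [tIdx, if_pos (show ((0:Fin 2).val = 0) from rfl)]
            show sdelta Γ - 1 - (sdelta Γ - 1 - t) = t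
            omega
          have hd := hc (⟨sdelta Γ - 1 - t, by omega⟩, 0) (by
            rw [kerF_apply hδ1, htt]
            exact hne)
          have hZ := Zl (Γ := Γ) hδ1 (i := sdelta Γ - 1 - t) (by omega)
          rw [show sdelta Γ - 1 - (sdelta Γ - 1 - t) = t by omega] at hZ
          rw [hd]
          push_cast
          linear_combination hZ
        · have htt : tIdx Γ (⟨t - sdelta Γ, by omega⟩, (1:Fin 2)) = t := by
            rw [tIdx, if_neg (show ¬((1:Fin 2).val = 0) from by norm_num)]
            show sdelta Γ + (t - sdelta Γ) = t
            omega
          have hd := hc (⟨t - sdelta Γ, by omega⟩, 1) (by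
            rw [kerF_apply hδ1, htt]
            exact hne)
          have hZ := Zr (Γ := Γ) (i := t - sdelta Γ)
          rw [show sdelta Γ + (t - sdelta Γ) = t by omega] at hZ
          rw [hd]
          have hcast : ((t - sdelta Γ : ℕ) : ℚ) = (t : ℚ) - (sdelta Γ : ℚ) := by
            have h4 : ((t - sdelta Γ : ℕ) : ℤ) = (t : ℤ) - (sdelta Γ : ℤ) := by omega
            exact_mod_cast congrArg (fun z : ℤ => (z : ℚ)) h4
          push_cast
          linear_combination hZ

end Ker
end HFAux
end
open HFAux in
/-- (Example 8.1 of the paper: `p = q = 1`, i.e. `(−1)`-surgery.)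
`t_0 = 2δ−2`, `τ_0(2t) = t(t−2δ+1)/2`, `r_0 = δ(δ−1)`, and there are
isomorphisms of graded `ℤ[U]`-modules
`ℍ(R_{τ_0},χ_{τ_0})[δ(δ−1)] ≅ T⁺_0 ⊕ T_0(α_{δ−1}) ⊕ ⊕_{i=1}^{δ−1} T_{i(i+1)}(α_{δ−1+i})^{⊕2}`
and `Ker U ≅ ⊕_{i=0}^{δ−1} ℤ_{(i²+i)}^{⊕2}`. -/
theorem HF_of_minus_one_surgery
    (Γ : Set ℕ)
    (h0 : 0 ∈ Γ) (hadd : ∀ x ∈ Γ, ∀ y ∈ Γ, x + y ∈ Γ)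
    (hfin : Γᶜ.Finite) (hδ1 : 1 ≤ sdelta Γ)
    (hsym : ∀ k : ℕ, k ≤ 2 * sdelta Γ - 1 → (k ∈ Γ ↔ (2 * sdelta Γ - 1 - k) ∉ Γ))
    (τ : ℕ → ℤ) (hτ : τ = tauFun Γ 1 1 0)
    (T : ℕ) (hT : T = rootT0 Γ 1 1 0) :
    tA Γ 1 1 0 = 2 * (sdelta Γ : ℤ) - 2
      ∧ (∀ t : ℕ, t ≤ 2 * sdelta Γ - 1 →
          τ (2 * t) = (t : ℤ) * ((t : ℤ) - 2 * (sdelta Γ : ℤ) + 1) / 2)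
      ∧ 3 * dedekindSum 1 1
            + 2 * (∑ j ∈ Finset.Icc (1 : ℕ) 0, Int.fract ((j : ℚ) * 1 / 1))
            - (1 + 2 * (0 : ℚ)) * ((1 : ℚ) - 1) / (2 * 1)
            + (sdelta Γ : ℚ) * (1 - ((1 : ℚ) + 1) / 1)
            + (sdelta Γ : ℚ) ^ 2 * 1 / 1 - 2 * (sdelta Γ : ℚ) * 0 / 1
          = (sdelta Γ : ℚ) * ((sdelta Γ : ℚ) - 1)
      ∧ (∃ e : Hmod (rootAdj T τ) (rootχ T τ) ≃ₗ[ℤ]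
            Targ (Sum.elim (fun _ : Unit => salpha Γ (sdelta Γ - 1))
              (fun x : Fin (sdelta Γ - 1) × Fin 2 => salpha Γ (sdelta Γ + x.1.val))),
          (∀ φ, e (HU (rootAdj T τ) (rootχ T τ) φ)
              = TargU (Sum.elim (fun _ : Unit => salpha Γ (sdelta Γ - 1))
                  (fun x : Fin (sdelta Γ - 1) × Fin 2 => salpha Γ (sdelta Γ + x.1.val)))
                  (e φ))
          ∧ (∀ (d : ℚ) (φ : Hmod (rootAdj T τ) (rootχ T τ)),
              HHomog (rootχ T τ) ((sdelta Γ : ℚ) * ((sdelta Γ : ℚ) - 1)) d φ.1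
                ↔ TargHomog 0
                    (Sum.elim (fun _ : Unit => (0 : ℚ))
                      (fun x : Fin (sdelta Γ - 1) × Fin 2 =>
                        ((x.1.val : ℚ) + 1) * ((x.1.val : ℚ) + 2)))
                    d (e φ)))
      ∧ (∃ e2 : LinearMap.ker (HU (rootAdj T τ) (rootχ T τ)) ≃ₗ[ℤ]
            (Fin (sdelta Γ) × Fin 2 → ℤ),
          ∀ (d : ℚ) (x : LinearMap.ker (HU (rootAdj T τ) (rootχ T τ))),
            HHomog (rootχ T τ) ((sdelta Γ : ℚ) * ((sdelta Γ : ℚ) - 1)) d x.1.1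
              ↔ ∀ ic : Fin (sdelta Γ) × Fin 2,
                  e2 x ic ≠ 0 → d = (ic.1.val : ℚ) ^ 2 + (ic.1.val : ℚ)) := by
  subst hτ hT
  refine ⟨?_, ?_, ?_, ?_, ?_⟩
  · simp only [tA, Nat.cast_one, Nat.cast_zero, mul_one, sub_zero, Int.ediv_one]
    ring
  · intro t ht
    have h3 : (t:ℤ) * ((t:ℤ) - 2 * (sdelta Γ : ℤ) + 1) = 2 * tauEven Γ 1 1 0 t := by
      linear_combination - tauEven_two (Γ := Γ) t
    rw [tau_even, h3, Int.mul_ediv_cancel_left _ (by norm_num : (2:ℤ) ≠ 0)]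
  · have hd : dedekindSum 1 1 = 0 := by
      norm_num [dedekindSum, sawtooth]
    have hicc : (Finset.Icc (1:ℕ) 0) = ∅ := Finset.Icc_eq_empty (by norm_num)
    rw [hd, hicc]
    simp
    ring
  · refine ⟨LinearEquiv.ofBijective (forwardL h0 hfin hδ1 hsym)
      ⟨forward_inj h0 hfin hδ1 hsym, forward_surj h0 hfin hδ1 hsym⟩, ?_, ?_⟩
    · intro φ
      exact forward_equiv h0 hfin hδ1 hsym φ
    · intro d φ
      exact homog_iff h0 hfin hδ1 hsym d φ
  · refine ⟨LinearEquiv.ofBijective (kerF (Γ := Γ) hδ1)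
      ⟨kerF_inj h0 hfin hδ1 hsym, kerF_surj h0 hfin hδ1 hsym⟩, ?_⟩
    intro d x
    exact ker_homog_iff h0 hfin hδ1 hsym d x
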